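/- arXiv:math/9901154 — 12 statements merged into one kernel-verified Lean document; each statement's English description precedes it below -/
import Mathlib

section
/- Let α, β, γ, c₁ be real constants, set κ = 0 and μ = 0, and let w : ℝ → ℝ be four times continuously differentiable and satisfy w·w⁗ + α·w′·w‴ + β·(w″)² + 2γ·(w·w″ + (w′)²) − c₁²·w″ − 5c₁·w′ − 6w = 0 on ℝ. Then the function u(x,t) = t⁻²·w(x − c₁·log t) solves equation (1) at every point (x,t) with x ∈ ℝ and t > 0. -/
open Filter Topology

lemma iterCM (n : ℕ) {f : ℝ → ℝ} (hf : ContDiff ℝ n f) (c x : ℝ) :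
    iteratedDeriv n (fun y => c * f y) x = c * iteratedDeriv n f x := by
  simp only [← iteratedDerivWithin_univ]
  exact iteratedDerivWithin_const_mul (Set.mem_univ x) uniqueDiffOn_univ c hf.contDiffWithinAt

lemma iterShift (n : ℕ) (f : ℝ → ℝ) (a x : ℝ) :
    iteratedDeriv n (fun y => f (y - a)) x = iteratedDeriv n f (x - a) := by
  simpa [sub_eq_add_neg] using congrFun (iteratedDeriv_comp_add_const n f (-a)) x

lemma iterCMShift (n : ℕ) {f : ℝ → ℝ} (hf : ContDiff ℝ n f) (c a x : ℝ) :
    iteratedDeriv n (fun y => c * f (y - a)) x = c * iteratedDeriv n f (x - a) := by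
  have hg : ContDiff ℝ n (fun y => f (y - a)) := hf.comp (contDiff_id.sub contDiff_const)
  rw [iterCM n hg c x, iterShift]

lemma iter2_sq {w : ℝ → ℝ} (hw : ContDiff ℝ 4 w) (z : ℝ) :
    iteratedDeriv 2 (fun y => w y ^ 2) z
      = 2 * (w z * iteratedDeriv 2 w z + (deriv w z) ^ 2) := by
  have hw0 : Differentiable ℝ w := hw.differentiable (by norm_num)
  have hw1 : Differentiable ℝ (deriv w) := by
    have := hw.differentiable_iteratedDeriv 1 (by norm_num)
    simpa [iteratedDeriv_one] using this
  have h1 : deriv (fun y => w y ^ 2) = fun y => 2 * w y * deriv w y := by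
    funext y
    rw [deriv_fun_pow (hw0 y) 2]
    ring
  have h2 : iteratedDeriv 2 w = deriv (deriv w) := by
    rw [iteratedDeriv_succ, iteratedDeriv_one]
  rw [iteratedDeriv_succ, iteratedDeriv_one, h1, h2]
  have hd : HasDerivAt (fun y => 2 * w y * deriv w y)
      (2 * ((deriv w z) * deriv w z + w z * deriv (deriv w) z)) z := by
    have := (((hw0 z).hasDerivAt).const_mul 2).fun_mul ((hw1 z).hasDerivAt)
    refine this.congr_deriv ?_
    ring
  rw [hd.deriv]
  ring



/-- `u` solves equation (1), the nonlinear fourth order PDE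
`u_tt = (κ u + γ u²)_xx + u u_xxxx + μ u_xxtt + α u_x u_xxx + β (u_xx)²`,
at the point `(x, t)`. -/
noncomputable def SolvesEq1 (α β γ κ μ : ℝ) (u : ℝ → ℝ → ℝ) (x t : ℝ) : Prop :=
  iteratedDeriv 2 (fun s => u x s) t =
    iteratedDeriv 2 (fun y => κ * u y t + γ * (u y t) ^ 2) x
    + u x t * iteratedDeriv 4 (fun y => u y t) x
    + μ * iteratedDeriv 2 (fun y => iteratedDeriv 2 (fun s => u y s) t) x
    + α * deriv (fun y => u y t) x * iteratedDeriv 3 (fun y => u y t) x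
    + β * (iteratedDeriv 2 (fun y => u y t) x) ^ 2

theorem reduction_log_solves_eq1 (α β γ c₁ : ℝ) (w : ℝ → ℝ)
    (hw : ContDiff ℝ 4 w)
    (hODE : ∀ z : ℝ,
      w z * iteratedDeriv 4 w z
        + α * deriv w z * iteratedDeriv 3 w z
        + β * (iteratedDeriv 2 w z) ^ 2
        + 2 * γ * (w z * iteratedDeriv 2 w z + (deriv w z) ^ 2)
        - c₁ ^ 2 * iteratedDeriv 2 w z
        - 5 * c₁ * deriv w z
        - 6 * w z = 0) :
    ∀ x t : ℝ, 0 < t →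
      SolvesEq1 α β γ 0 0 (fun x t => t⁻¹ ^ 2 * w (x - c₁ * Real.log t)) x t := by
  intro x t ht
  have hw0 : Differentiable ℝ w := hw.differentiable (by norm_num)
  have hw1 : Differentiable ℝ (deriv w) := by
    have := hw.differentiable_iteratedDeriv 1 (by norm_num)
    simpa [iteratedDeriv_one] using this
  set a : ℝ := c₁ * Real.log t with ha
  set z : ℝ := x - a with hz
  set C : ℝ := t⁻¹ ^ 2 with hC
  -- time derivative part
  set g1 : ℝ → ℝ := fun s =>
    -2 * s⁻¹ ^ 3 * w (x - c₁ * Real.log s)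
    - c₁ * s⁻¹ ^ 3 * deriv w (x - c₁ * Real.log s) with hg1
  have hinv : ∀ (k : ℕ) (s : ℝ), s ≠ 0 →
      HasDerivAt (fun y : ℝ => y⁻¹ ^ (k + 1))
        (-(k + 1 : ℝ) * s⁻¹ ^ (k + 2)) s := by
    intro k s hs
    have h := (hasDerivAt_inv hs).fun_pow (k + 1)
    refine h.congr_deriv ?_
    rw [← inv_pow]
    push_cast
    ring
  have hLd : ∀ s : ℝ, s ≠ 0 →
      HasDerivAt (fun y : ℝ => x - c₁ * Real.log y) (-(c₁ * s⁻¹)) s := fun s hs =>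
    ((Real.hasDerivAt_log hs).const_mul c₁).const_sub x
  have hwc : ∀ s : ℝ, s ≠ 0 →
      HasDerivAt (fun y : ℝ => w (x - c₁ * Real.log y))
        (deriv w (x - c₁ * Real.log s) * (-(c₁ * s⁻¹))) s := fun s hs =>
    ((hw0 _).hasDerivAt).comp s (hLd s hs)
  have hw1c : ∀ s : ℝ, s ≠ 0 →
      HasDerivAt (fun y : ℝ => deriv w (x - c₁ * Real.log y))
        (deriv (deriv w) (x - c₁ * Real.log s) * (-(c₁ * s⁻¹))) s := fun s hs =>
    ((hw1 _).hasDerivAt).comp s (hLd s hs)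
  have Hg : ∀ s : ℝ, 0 < s →
      HasDerivAt (fun s : ℝ => s⁻¹ ^ 2 * w (x - c₁ * Real.log s)) (g1 s) s := by
    intro s hs0
    have hs := hs0.ne'
    have := (hinv 1 s hs).fun_mul (hwc s hs)
    refine this.congr_deriv ?_
    simp only [hg1]
    norm_num
    ring
  have hEq : deriv (fun s : ℝ => s⁻¹ ^ 2 * w (x - c₁ * Real.log s)) =ᶠ[𝓝 t] g1 :=
    Filter.eventuallyEq_of_mem (Ioi_mem_nhds ht) (fun s hs => (Hg s hs).deriv)
  have Hg1 : HasDerivAt g1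
      (t⁻¹ ^ 4 * (6 * w z + 5 * c₁ * deriv w z + c₁ ^ 2 * deriv (deriv w) z)) t := by
    have hA := ((hinv 2 t ht.ne').const_mul (-2)).fun_mul (hwc t ht.ne')
    have hB := ((hinv 2 t ht.ne').const_mul c₁).fun_mul (hw1c t ht.ne')
    have := hA.fun_sub hB
    refine this.congr_deriv ?_
    norm_num
    ring
  have hTime : iteratedDeriv 2 (fun s : ℝ => s⁻¹ ^ 2 * w (x - c₁ * Real.log s)) t
      = t⁻¹ ^ 4 * (6 * w z + 5 * c₁ * deriv w z + c₁ ^ 2 * deriv (deriv w) z) := by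
    rw [iteratedDeriv_succ, iteratedDeriv_one, hEq.deriv_eq, Hg1.deriv]
  -- spatial derivatives
  have hsp : ∀ n : ℕ, n ≤ 4 →
      iteratedDeriv n (fun y : ℝ => C * w (y - a)) x = C * iteratedDeriv n w z := by
    intro n hn
    exact iterCMShift n (hw.of_le (by exact_mod_cast hn)) C a x
  have hsp1 : deriv (fun y : ℝ => C * w (y - a)) x = C * deriv w z := by
    have := hsp 1 (by norm_num)
    simp only [iteratedDeriv_one] at this
    exact this
  have hsq : iteratedDeriv 2 (fun y : ℝ => 0 * (C * w (y - a)) + γ * (C * w (y - a)) ^ 2) x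
      = γ * C ^ 2 * (2 * (w z * iteratedDeriv 2 w z + (deriv w z) ^ 2)) := by
    have hfun : (fun y : ℝ => 0 * (C * w (y - a)) + γ * (C * w (y - a)) ^ 2)
        = fun y : ℝ => (γ * C ^ 2) * (fun v => w v ^ 2) (y - a) := by
      funext y; ring
    rw [hfun, iterCMShift 2 ((hw.of_le (by norm_num)).pow 2) (γ * C ^ 2) a x,
      iter2_sq hw z]
  have h2 : iteratedDeriv 2 w = deriv (deriv w) := by
    rw [iteratedDeriv_succ, iteratedDeriv_one]
  -- put it together
  show iteratedDeriv 2 (fun s : ℝ => s⁻¹ ^ 2 * w (x - c₁ * Real.log s)) t = _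
  rw [hTime]
  simp only [← ha, ← hC]
  rw [hsq, hsp 4 (by norm_num), hsp 3 (by norm_num), hsp1, hsp 2 (by norm_num)]
  rw [h2] at hODE ⊢
  have hODEz := hODE z
  have hC4 : C ^ 2 = t⁻¹ ^ 4 := by rw [hC]; ring
  rw [← hC4]
  linear_combination (-C ^ 2) * hODEz
end

section
/- Let α, β, κ be real constants, set γ = 0 and μ = 0, and let w : ℝ → ℝ be four times continuously differentiable and satisfy w(z)·w⁗(z) + α·w′(z)·w‴(z) + β·(w″(z))² + κ·w″(z) − z²·w″(z) + 2z·w′(z) − 2·w(z) = 0 for all z ∈ ℝ. Then the function u(x,t) = t²·w(x/t) solves equation (1) at every point (x,t) with x ∈ ℝ and t > 0. -/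
open Filter Topology

private lemma itd_cmul {n : ℕ} (c : ℝ) {f : ℝ → ℝ} (hf : ContDiff ℝ n f) (x : ℝ) :
    iteratedDeriv n (fun y => c * f y) x = c * iteratedDeriv n f x := by
  rw [← iteratedDerivWithin_univ, ← iteratedDerivWithin_univ,
    iteratedDerivWithin_const_mul (Set.mem_univ x) uniqueDiffOn_univ c hf.contDiffWithinAt]

private lemma itd_scaled {w : ℝ → ℝ} (hw : ContDiff ℝ 4 w) {t : ℝ}
    (n : ℕ) (hn : (n : WithTop ℕ∞) ≤ 4) (x : ℝ) :
    iteratedDeriv n (fun y => w (y / t)) x = t⁻¹ ^ n * iteratedDeriv n w (x / t) := by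
  have h1 : (fun y : ℝ => w (y / t)) = fun y => w (t⁻¹ * y) := by
    funext y; rw [inv_mul_eq_div]
  rw [h1]
  have := congrFun (iteratedDeriv_comp_const_mul (hw.of_le hn) t⁻¹) x
  simpa [inv_mul_eq_div] using this

theorem reduction_selfsimilar_solves_eq1 (α β κ : ℝ) (w : ℝ → ℝ)
    (hw : ContDiff ℝ 4 w)
    (hODE : ∀ z : ℝ,
      w z * iteratedDeriv 4 w z
        + α * deriv w z * iteratedDeriv 3 w z
        + β * (iteratedDeriv 2 w z) ^ 2
        + κ * iteratedDeriv 2 w z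
        - z ^ 2 * iteratedDeriv 2 w z
        + 2 * z * deriv w z
        - 2 * w z = 0) :
    ∀ x t : ℝ, 0 < t →
      SolvesEq1 α β 0 κ 0 (fun x t => t ^ 2 * w (x / t)) x t := by
  intro x t ht
  have ht' : t ≠ 0 := ne_of_gt ht
  have hF : ContDiff ℝ 4 (fun y : ℝ => t ^ 2 * w (y / t)) :=
    contDiff_const.mul (hw.comp (contDiff_id.div_const t))
  -- derivatives of iterated derivatives of w
  have hdiff : ∀ k : ℕ, k < 4 → ∀ y : ℝ,
      HasDerivAt (iteratedDeriv k w) (iteratedDeriv (k + 1) w y) y := by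
    intro k hk y
    have h1 : DifferentiableAt ℝ (iteratedDeriv k w) y :=
      (hw.differentiable_iteratedDeriv k (by exact_mod_cast hk)).differentiableAt
    rw [iteratedDeriv_succ]
    exact h1.hasDerivAt
  have hxs : ∀ s : ℝ, s ≠ 0 → HasDerivAt (fun s : ℝ => x / s) (-(x / s ^ 2)) s := by
    intro s hs
    have h := (hasDerivAt_inv hs).const_mul x
    have h2 : (fun y : ℝ => x * y⁻¹) = fun y : ℝ => x / y := by
      funext y; rw [div_eq_mul_inv]
    rw [h2] at h
    refine h.congr_deriv ?_
    ring
  have hcomp : ∀ k : ℕ, k < 4 → ∀ s : ℝ, s ≠ 0 →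
      HasDerivAt (fun s : ℝ => iteratedDeriv k w (x / s))
        (iteratedDeriv (k + 1) w (x / s) * (-(x / s ^ 2))) s :=
    fun k hk s hs => (hdiff k hk (x / s)).comp s (hxs s hs)
  -- first time-derivative
  have hG : ∀ s : ℝ, s ≠ 0 → HasDerivAt (fun s : ℝ => s ^ 2 * w (x / s))
      (2 * s * w (x / s) - x * iteratedDeriv 1 w (x / s)) s := by
    intro s hs
    have h1 : HasDerivAt (fun s : ℝ => s ^ 2) (2 * s) s := by
      simpa using hasDerivAt_pow 2 s
    have h2 := hcomp 0 (by norm_num) s hs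
    simp only [iteratedDeriv_zero] at h2
    have h3 := h1.fun_mul h2
    refine h3.congr_deriv ?_
    field_simp
    ring
  have hev : deriv (fun s : ℝ => s ^ 2 * w (x / s)) =ᶠ[𝓝 t]
      fun s => 2 * s * w (x / s) - x * iteratedDeriv 1 w (x / s) := by
    filter_upwards [eventually_ne_nhds ht'] with s hs
    exact (hG s hs).deriv
  have htime : iteratedDeriv 2 (fun s : ℝ => s ^ 2 * w (x / s)) t =
      2 * w (x / t) - 2 * (x / t) * iteratedDeriv 1 w (x / t)
        + (x / t) ^ 2 * iteratedDeriv 2 w (x / t) := by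
    rw [iteratedDeriv_succ, iteratedDeriv_one, hev.deriv_eq]
    have hA : HasDerivAt (fun s : ℝ => 2 * s * w (x / s))
        (2 * w (x / t) + 2 * t * (iteratedDeriv 1 w (x / t) * (-(x / t ^ 2)))) t := by
      have h1 : HasDerivAt (fun s : ℝ => 2 * s) 2 t := by
        simpa using (hasDerivAt_id t).const_mul 2
      have h2 := hcomp 0 (by norm_num) t ht'
      simp only [iteratedDeriv_zero] at h2
      have h3 := h1.fun_mul h2
      convert h3 using 1
    have hB : HasDerivAt (fun s : ℝ => x * iteratedDeriv 1 w (x / s))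
        (x * (iteratedDeriv 2 w (x / t) * (-(x / t ^ 2)))) t :=
      (hcomp 1 (by norm_num) t ht').const_mul x
    rw [(hA.fun_sub hB).deriv]
    field_simp
    ring
  -- space derivatives
  have key : ∀ n : ℕ, (n : WithTop ℕ∞) ≤ 4 → ∀ y : ℝ,
      iteratedDeriv n (fun y : ℝ => t ^ 2 * w (y / t)) y =
        t ^ 2 * (t⁻¹ ^ n * iteratedDeriv n w (y / t)) := by
    intro n hn y
    have hf' : ContDiff ℝ n (fun y : ℝ => w (y / t)) :=
      (hw.comp (contDiff_id.div_const t)).of_le hn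
    rw [itd_cmul (t ^ 2) hf' y, itd_scaled hw n hn y]
  simp only [SolvesEq1]
  rw [htime]
  have e1 : (fun y : ℝ => κ * (t ^ 2 * w (y / t)) + 0 * (t ^ 2 * w (y / t)) ^ 2) =
      fun y : ℝ => κ * (t ^ 2 * w (y / t)) := by funext y; ring
  rw [e1, itd_cmul κ (hF.of_le (by norm_num)) x]
  rw [← iteratedDeriv_one]
  rw [key 1 (by norm_num) x, key 2 (by norm_num) x, key 3 (by norm_num) x,
    key 4 (by norm_num) x]
  have hO := hODE (x / t)
  simp only [iteratedDeriv_one, zero_mul, add_zero, pow_one]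
  field_simp at hO ⊢
  linear_combination (-1) * hO
end

section
/- Let α, β, c₄ be real constants, set κ = γ = μ = 0, and let w : ℝ → ℝ be four times continuously differentiable and satisfy w(z)·w⁗(z) + α·w′(z)·w‴(z) + β·(w″(z))² − c₄²·z²·w″(z) + 7c₄²·z·w′(z) − 16c₄²·w(z) = 0 for all z ∈ ℝ. Then the function u(x,t) = exp(4c₄·t)·w(x·exp(−c₄·t)) solves equation (1) at every point (x,t) ∈ ℝ². -/
lemma aux_x_deriv (w : ℝ → ℝ) (hw : ContDiff ℝ 4 w) (n : ℕ) (hn : (n : WithTop ℕ∞) ≤ 4)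
    (a b y : ℝ) :
    iteratedDeriv n (fun z => a * w (z * b)) y = a * b ^ n * iteratedDeriv n w (y * b) := by
  have h1 : (fun z => a * w (z * b)) = fun z => a * w (b * z) := by
    simp [mul_comm]
  have hw' : ContDiff ℝ n w := hw.of_le hn
  rw [h1]
  have h2 : iteratedDeriv n (fun z => a * w (b * z)) y
      = a * iteratedDeriv n (fun z => w (b * z)) y := by
    simp only [← iteratedDerivWithin_univ]
    exact iteratedDerivWithin_const_mul (Set.mem_univ y) uniqueDiffOn_univ a
      ((hw'.comp (contDiff_const.mul contDiff_id)).contDiffWithinAt)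
  rw [h2, congrFun (iteratedDeriv_comp_const_mul hw' b) y, mul_comm b y]
  ring

theorem reduction_exp_solves_eq1 (α β c₄ : ℝ) (w : ℝ → ℝ)
    (hw : ContDiff ℝ 4 w)
    (hODE : ∀ z : ℝ,
      w z * iteratedDeriv 4 w z
        + α * deriv w z * iteratedDeriv 3 w z
        + β * (iteratedDeriv 2 w z) ^ 2
        - c₄ ^ 2 * z ^ 2 * iteratedDeriv 2 w z
        + 7 * c₄ ^ 2 * z * deriv w z
        - 16 * c₄ ^ 2 * w z = 0) :
    ∀ x t : ℝ,
      SolvesEq1 α β 0 0 0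
        (fun x t => Real.exp (4 * c₄ * t) * w (x * Real.exp (-c₄ * t))) x t := by
  intro x t
  have hD : Differentiable ℝ w := hw.differentiable (by norm_num)
  have hD1 : Differentiable ℝ (deriv w) := by
    have := hw.differentiable_iteratedDeriv 1 (by norm_num)
    simpa [iteratedDeriv_one] using this
  -- inner function of time
  have hz : ∀ s : ℝ, HasDerivAt (fun s : ℝ => x * Real.exp (-c₄ * s))
      (x * (Real.exp (-c₄ * s) * (-c₄ * 1))) s := fun s =>
    (((hasDerivAt_id s).const_mul (-c₄)).exp).const_mul x
  have hstep1 : ∀ s : ℝ,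
      HasDerivAt (fun s => Real.exp (4 * c₄ * s) * w (x * Real.exp (-c₄ * s)))
        (c₄ * Real.exp (4 * c₄ * s) *
          (4 * w (x * Real.exp (-c₄ * s))
            - (x * Real.exp (-c₄ * s)) * deriv w (x * Real.exp (-c₄ * s)))) s := by
    intro s
    have h1 : HasDerivAt (fun s : ℝ => Real.exp (4 * c₄ * s))
        (Real.exp (4 * c₄ * s) * (4 * c₄ * 1)) s :=
      ((hasDerivAt_id s).const_mul (4 * c₄)).exp
    have h2 : HasDerivAt (fun s => w (x * Real.exp (-c₄ * s)))
        (deriv w (x * Real.exp (-c₄ * s)) * (x * (Real.exp (-c₄ * s) * (-c₄ * 1)))) s :=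
      (hD (x * Real.exp (-c₄ * s))).hasDerivAt.comp s (hz s)
    have := h1.fun_mul h2
    exact this.congr_deriv (by ring)
  have hstep2 : ∀ s : ℝ,
      HasDerivAt (fun s => c₄ * Real.exp (4 * c₄ * s) *
          (4 * w (x * Real.exp (-c₄ * s))
            - (x * Real.exp (-c₄ * s)) * deriv w (x * Real.exp (-c₄ * s))))
        (c₄ ^ 2 * Real.exp (4 * c₄ * s) *
          (16 * w (x * Real.exp (-c₄ * s))
            - 7 * (x * Real.exp (-c₄ * s)) * deriv w (x * Real.exp (-c₄ * s))
            + (x * Real.exp (-c₄ * s)) ^ 2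
              * iteratedDeriv 2 w (x * Real.exp (-c₄ * s)))) s := by
    intro s
    have hA : HasDerivAt (fun s : ℝ => c₄ * Real.exp (4 * c₄ * s))
        (c₄ * (Real.exp (4 * c₄ * s) * (4 * c₄ * 1))) s :=
      (((hasDerivAt_id s).const_mul (4 * c₄)).exp).const_mul c₄
    have h2w : HasDerivAt (deriv w) (iteratedDeriv 2 w (x * Real.exp (-c₄ * s)))
        (x * Real.exp (-c₄ * s)) := by
      have := (hD1 (x * Real.exp (-c₄ * s))).hasDerivAt
      rwa [show iteratedDeriv 2 w (x * Real.exp (-c₄ * s))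
        = deriv (deriv w) (x * Real.exp (-c₄ * s)) by
          rw [iteratedDeriv_succ, iteratedDeriv_one]]
    have hB1 : HasDerivAt (fun s => w (x * Real.exp (-c₄ * s)))
        (deriv w (x * Real.exp (-c₄ * s)) * (x * (Real.exp (-c₄ * s) * (-c₄ * 1)))) s :=
      (hD (x * Real.exp (-c₄ * s))).hasDerivAt.comp s (hz s)
    have hB2 : HasDerivAt (fun s => deriv w (x * Real.exp (-c₄ * s)))
        (iteratedDeriv 2 w (x * Real.exp (-c₄ * s))
          * (x * (Real.exp (-c₄ * s) * (-c₄ * 1)))) s :=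
      HasDerivAt.comp (h₂ := deriv w) s h2w (hz s)
    have hB := (hB1.const_mul 4).fun_sub ((hz s).fun_mul hB2)
    have := hA.fun_mul hB
    exact this.congr_deriv (by ring)
  have hf' : deriv (fun s => Real.exp (4 * c₄ * s) * w (x * Real.exp (-c₄ * s)))
      = fun s => c₄ * Real.exp (4 * c₄ * s) *
          (4 * w (x * Real.exp (-c₄ * s))
            - (x * Real.exp (-c₄ * s)) * deriv w (x * Real.exp (-c₄ * s))) :=
    funext fun s => (hstep1 s).deriv
  have hLHS : iteratedDeriv 2 (fun s => Real.exp (4 * c₄ * s) * w (x * Real.exp (-c₄ * s))) t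
      = c₄ ^ 2 * Real.exp (4 * c₄ * t) *
          (16 * w (x * Real.exp (-c₄ * t))
            - 7 * (x * Real.exp (-c₄ * t)) * deriv w (x * Real.exp (-c₄ * t))
            + (x * Real.exp (-c₄ * t)) ^ 2
              * iteratedDeriv 2 w (x * Real.exp (-c₄ * t))) := by
    rw [iteratedDeriv_succ, iteratedDeriv_one, hf']
    exact (hstep2 t).deriv
  have hderiv1 : deriv (fun y => Real.exp (4 * c₄ * t) * w (y * Real.exp (-c₄ * t))) x
      = Real.exp (4 * c₄ * t) * Real.exp (-c₄ * t) ^ 1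
        * iteratedDeriv 1 w (x * Real.exp (-c₄ * t)) := by
    rw [← iteratedDeriv_one]
    exact aux_x_deriv w hw 1 (by norm_num) _ _ x
  simp only [SolvesEq1]
  rw [hLHS, hderiv1, aux_x_deriv w hw 4 (by norm_num), aux_x_deriv w hw 3 (by norm_num),
    aux_x_deriv w hw 2 (by norm_num)]
  have hzero : iteratedDeriv 2
      (fun y => 0 * (Real.exp (4 * c₄ * t) * w (y * Real.exp (-c₄ * t)))
        + 0 * (Real.exp (4 * c₄ * t) * w (y * Real.exp (-c₄ * t))) ^ 2) x = 0 := by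
    simp [iteratedDeriv_succ]
  rw [hzero]
  have hQ : Real.exp (4 * c₄ * t) * Real.exp (-c₄ * t) ^ 4 = 1 := by
    rw [← Real.exp_nat_mul, ← Real.exp_add]
    norm_num
    ring
  have hODEz := hODE (x * Real.exp (-c₄ * t))
  rw [iteratedDeriv_one]
  linear_combination (-(Real.exp (4 * c₄ * t) ^ 2 * Real.exp (-c₄ * t) ^ 4)) * hODEz
    - (c₄ ^ 2 * Real.exp (4 * c₄ * t) *
        (16 * w (x * Real.exp (-c₄ * t))
          - 7 * (x * Real.exp (-c₄ * t)) * deriv w (x * Real.exp (-c₄ * t))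
          + (x * Real.exp (-c₄ * t)) ^ 2
            * iteratedDeriv 2 w (x * Real.exp (-c₄ * t)))) * hQ
end

section
/- Let α, β, c₄ be real constants, set κ = γ = μ = 0, and let w : ℝ → ℝ be four times continuously differentiable and satisfy w(z)·w⁗(z) + α·w′(z)·w‴(z) + β·(w″(z))² − c₄²·z²·w″(z) + (7c₄² − 5c₄)·z·w′(z) − (16c₄² − 20c₄ + 6)·w(z) = 0 for all z ∈ ℝ. Then the function u(x,t) = t^(4c₄ − 2)·w(x·t^(−c₄)) (real powers of t) solves equation (1) at every point (x,t) with x ∈ ℝ and t > 0. -/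
lemma spatial_aux (w : ℝ → ℝ) {n : ℕ} (hw : ContDiff ℝ n w) (C B x : ℝ) :
    iteratedDeriv n (fun y => C * w (y * B)) x = C * (B ^ n * iteratedDeriv n w (x * B)) := by
  have h1 : (fun y : ℝ => C * w (y * B)) = fun y => C * (fun z => w (B * z)) y := by
    funext y; rw [mul_comm y B]
  have h2 : ContDiff ℝ n (fun z : ℝ => w (B * z)) :=
    hw.comp (contDiff_const.mul contDiff_id)
  have h3 : iteratedDeriv n (fun z : ℝ => w (B * z)) x = B ^ n * iteratedDeriv n w (B * x) := by
    rw [iteratedDeriv_comp_const_mul hw B]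
  rw [h1, ← iteratedDerivWithin_univ,
    iteratedDerivWithin_const_mul (Set.mem_univ x) uniqueDiffOn_univ C h2.contDiffWithinAt,
    iteratedDerivWithin_univ, h3, mul_comm B x]


theorem reduction_power_solves_eq1 (α β c₄ : ℝ) (w : ℝ → ℝ)
    (hw : ContDiff ℝ 4 w)
    (hODE : ∀ z : ℝ,
      w z * iteratedDeriv 4 w z
        + α * deriv w z * iteratedDeriv 3 w z
        + β * (iteratedDeriv 2 w z) ^ 2
        - c₄ ^ 2 * z ^ 2 * iteratedDeriv 2 w z
        + (7 * c₄ ^ 2 - 5 * c₄) * z * deriv w z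
        - (16 * c₄ ^ 2 - 20 * c₄ + 6) * w z = 0) :
    ∀ x t : ℝ, 0 < t →
      SolvesEq1 α β 0 0 0
        (fun x t => t ^ (4 * c₄ - 2) * w (x * t ^ (-c₄))) x t := by
  intro x t ht
  unfold SolvesEq1
  simp only []
  -- kill the zero terms
  have hzero : (fun y : ℝ => (0:ℝ) * (t ^ (4*c₄-2) * w (y * t ^ (-c₄)))
      + 0 * (t ^ (4*c₄-2) * w (y * t ^ (-c₄))) ^ 2) = fun _ : ℝ => (0:ℝ) := by
    funext y; ring
  rw [hzero]
  have h0 : iteratedDeriv 2 (fun _ : ℝ => (0:ℝ)) x = 0 := by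
    simp [iteratedDeriv_succ, iteratedDeriv_zero]
  rw [h0]
  -- derivatives of iterated derivs of w
  have hwd : ∀ k : ℕ, k < 4 → ∀ p : ℝ,
      HasDerivAt (iteratedDeriv k w) (iteratedDeriv (k+1) w p) p := by
    intro k hk p
    have hd := hw.differentiable_iteratedDeriv k (by exact_mod_cast hk)
    simpa [iteratedDeriv_succ] using (hd p).hasDerivAt
  have hrp : ∀ p : ℝ, ∀ s : ℝ, 0 < s →
      HasDerivAt (fun s : ℝ => s ^ p) (p * s ^ (p - 1)) s :=
    fun p s hs => Real.hasDerivAt_rpow_const (Or.inl hs.ne')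
  have hzd : ∀ s : ℝ, 0 < s → HasDerivAt (fun s : ℝ => x * s ^ (-c₄))
      (x * (-c₄ * s ^ (-c₄ - 1))) s :=
    fun s hs => (hrp (-c₄) s hs).const_mul x
  have hC : ∀ k : ℕ, k < 4 → ∀ s : ℝ, 0 < s →
      HasDerivAt (fun s : ℝ => iteratedDeriv k w (x * s ^ (-c₄)))
        (iteratedDeriv (k+1) w (x * s ^ (-c₄)) * (x * (-c₄ * s ^ (-c₄ - 1)))) s :=
    fun k hk s hs => (hwd k hk _).comp s (hzd s hs)
  have hC0 : ∀ s : ℝ, 0 < s → HasDerivAt (fun s : ℝ => w (x * s ^ (-c₄)))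
      (iteratedDeriv 1 w (x * s ^ (-c₄)) * (x * (-c₄ * s ^ (-c₄ - 1)))) s := by
    intro s hs
    have := hC 0 (by norm_num) s hs
    simpa [iteratedDeriv_zero] using this
  set F1 : ℝ → ℝ := fun s =>
    (4*c₄-2) * s ^ (4*c₄-2-1) * w (x * s ^ (-c₄))
    + s ^ (4*c₄-2) * (iteratedDeriv 1 w (x * s ^ (-c₄)) * (x * (-c₄ * s ^ (-c₄-1)))) with hF1def
  have hF : ∀ s : ℝ, 0 < s →
      HasDerivAt (fun s : ℝ => s ^ (4*c₄-2) * w (x * s ^ (-c₄))) (F1 s) s := by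
    intro s hs
    exact (hrp (4*c₄-2) s hs).mul (hC0 s hs)
  -- derivative of F1 at t
  have h1 : HasDerivAt (fun s : ℝ => (4*c₄-2) * s ^ (4*c₄-2-1) * w (x * s ^ (-c₄)))
      (((4*c₄-2) * ((4*c₄-2-1) * t ^ (4*c₄-2-1-1))) * w (x * t ^ (-c₄))
        + ((4*c₄-2) * t ^ (4*c₄-2-1)) * (iteratedDeriv 1 w (x * t ^ (-c₄))
          * (x * (-c₄ * t ^ (-c₄-1))))) t :=
    (((hrp (4*c₄-2-1) t ht).const_mul (4*c₄-2)).mul (hC0 t ht))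
  have h2 : HasDerivAt (fun s : ℝ => s ^ (4*c₄-2)
        * (iteratedDeriv 1 w (x * s ^ (-c₄)) * (x * (-c₄ * s ^ (-c₄-1)))))
      (((4*c₄-2) * t ^ (4*c₄-2-1)) * (iteratedDeriv 1 w (x * t ^ (-c₄))
          * (x * (-c₄ * t ^ (-c₄-1))))
        + t ^ (4*c₄-2) *
          (iteratedDeriv 2 w (x * t ^ (-c₄)) * (x * (-c₄ * t ^ (-c₄-1)))
              * (x * (-c₄ * t ^ (-c₄-1)))
            + iteratedDeriv 1 w (x * t ^ (-c₄)) * (x * (-c₄ * ((-c₄-1) * t ^ (-c₄-1-1)))))) t := by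
    have hinner : HasDerivAt (fun s : ℝ => iteratedDeriv 1 w (x * s ^ (-c₄))
        * (x * (-c₄ * s ^ (-c₄-1))))
        (iteratedDeriv 2 w (x * t ^ (-c₄)) * (x * (-c₄ * t ^ (-c₄-1)))
            * (x * (-c₄ * t ^ (-c₄-1)))
          + iteratedDeriv 1 w (x * t ^ (-c₄)) * (x * (-c₄ * ((-c₄-1) * t ^ (-c₄-1-1))))) t :=
      (hC 1 (by norm_num) t ht).mul (((hrp (-c₄-1) t ht).const_mul (-c₄)).const_mul x)
    exact (hrp (4*c₄-2) t ht).mul hinner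
  have hE := h1.add h2
  have key1 : iteratedDeriv 2 (fun s : ℝ => s ^ (4*c₄-2) * w (x * s ^ (-c₄))) t =
      (((4*c₄-2) * ((4*c₄-2-1) * t ^ (4*c₄-2-1-1))) * w (x * t ^ (-c₄))
        + ((4*c₄-2) * t ^ (4*c₄-2-1)) * (iteratedDeriv 1 w (x * t ^ (-c₄))
          * (x * (-c₄ * t ^ (-c₄-1)))))
      + (((4*c₄-2) * t ^ (4*c₄-2-1)) * (iteratedDeriv 1 w (x * t ^ (-c₄))
          * (x * (-c₄ * t ^ (-c₄-1))))
        + t ^ (4*c₄-2) *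
          (iteratedDeriv 2 w (x * t ^ (-c₄)) * (x * (-c₄ * t ^ (-c₄-1)))
              * (x * (-c₄ * t ^ (-c₄-1)))
            + iteratedDeriv 1 w (x * t ^ (-c₄)) * (x * (-c₄ * ((-c₄-1) * t ^ (-c₄-1-1)))))) := by
    rw [iteratedDeriv_succ, iteratedDeriv_one]
    have hev : deriv (fun s : ℝ => s ^ (4*c₄-2) * w (x * s ^ (-c₄))) =ᶠ[nhds t] F1 := by
      filter_upwards [Ioi_mem_nhds ht] with s hs using (hF s hs).deriv
    rw [hev.deriv_eq]
    exact hE.deriv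
  rw [key1]
  rw [spatial_aux w (hw.of_le (by norm_num)) (t ^ (4*c₄-2)) (t ^ (-c₄)) x,
    spatial_aux w (hw.of_le (by norm_num)) (t ^ (4*c₄-2)) (t ^ (-c₄)) x,
    spatial_aux w (hw.of_le (by norm_num)) (t ^ (4*c₄-2)) (t ^ (-c₄)) x,
    ← iteratedDeriv_one,
    spatial_aux w (hw.of_le (by norm_num)) (t ^ (4*c₄-2)) (t ^ (-c₄)) x]
  simp only [iteratedDeriv_one]
  -- rpow arithmetic
  have key : ∀ p : ℝ, t ^ (p - 1) = t ^ p * t⁻¹ := by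
    intro p
    rw [show p - 1 = p + (-1) by ring, Real.rpow_add ht, Real.rpow_neg_one]
  have hAB : t ^ (4*c₄-2) * (t ^ (-c₄)) ^ (4:ℕ) = t⁻¹ * t⁻¹ := by
    rw [← Real.rpow_natCast (t ^ (-c₄)) 4, ← Real.rpow_mul ht.le, ← Real.rpow_add ht,
      show (4*c₄-2) + (-c₄ * ((4:ℕ):ℝ)) = (-1) + (-1) by push_cast; ring,
      Real.rpow_add ht, Real.rpow_neg_one]
  rw [key (4*c₄-2-1), key (-c₄-1), key (4*c₄-2), key (-c₄)]
  linear_combination (-(t ^ (4*c₄-2) * t⁻¹ * t⁻¹)) * hODE (x * t ^ (-c₄))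
    + (-(t ^ (4*c₄-2) * (w (x * t ^ (-c₄)) * iteratedDeriv 4 w (x * t ^ (-c₄))
        + α * deriv w (x * t ^ (-c₄)) * iteratedDeriv 3 w (x * t ^ (-c₄))
        + β * (iteratedDeriv 2 w (x * t ^ (-c₄))) ^ 2))) * hAB
end

section
/- Let α, γ, κ, μ, a₁, a₂ be real constants with α ≠ 0, α ≠ 1, γ ≠ 0 and γ/α > 0, and set β = α − 1, a₃ = √(2γ/α) and a₄ = (α·(κ − a₁²) − 2a₁²·γ·μ)/(2γ·(1 − α)). Then the function u(x,t) = a₂·cos(a₃·(x − a₁·t)) + a₄ solves equation (1) at every point (x,t) ∈ ℝ². -/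
private lemma hd_cos (A c e : ℝ) (y : ℝ) :
    HasDerivAt (fun y => A * Real.cos (c * y + e)) (-(A * c) * Real.sin (c * y + e)) y := by
  have h : HasDerivAt (fun y : ℝ => c * y + e) c y := by
    simpa using ((hasDerivAt_id y).const_mul c).add_const e
  have := h.cos.const_mul A
  rw [show -(A * c) * Real.sin (c * y + e) = A * (-Real.sin (c * y + e) * c) by ring]; exact this

private lemma hd_sin (A c e : ℝ) (y : ℝ) :
    HasDerivAt (fun y => A * Real.sin (c * y + e)) ((A * c) * Real.cos (c * y + e)) y := by
  have h : HasDerivAt (fun y : ℝ => c * y + e) c y := by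
    simpa using ((hasDerivAt_id y).const_mul c).add_const e
  have := h.sin.const_mul A
  rw [show (A * c) * Real.cos (c * y + e) = A * (Real.cos (c * y + e) * c) by ring]; exact this

private lemma dcos (A c e : ℝ) :
    (deriv fun y => A * Real.cos (c * y + e)) = fun y => (-(A * c)) * Real.sin (c * y + e) := by
  funext y; exact (hd_cos A c e y).deriv

private lemma dsin (A c e : ℝ) :
    (deriv fun y => A * Real.sin (c * y + e)) = fun y => ((A * c)) * Real.cos (c * y + e) := by
  funext y; exact (hd_sin A c e y).deriv

private lemma dcosD (A c e D : ℝ) :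
    (deriv fun y => A * Real.cos (c * y + e) + D) = fun y => (-(A * c)) * Real.sin (c * y + e) := by
  funext y; exact ((hd_cos A c e y).add_const D).deriv

private lemma dccD (A₁ c₁ e₁ A₂ c₂ e₂ D : ℝ) :
    (deriv fun y => A₁ * Real.cos (c₁ * y + e₁) + (A₂ * Real.cos (c₂ * y + e₂) + D)) =
      fun y => (-(A₁ * c₁)) * Real.sin (c₁ * y + e₁) + (-(A₂ * c₂)) * Real.sin (c₂ * y + e₂) := by
  funext y; exact ((hd_cos A₁ c₁ e₁ y).add ((hd_cos A₂ c₂ e₂ y).add_const D)).deriv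

private lemma dss (A₁ c₁ e₁ A₂ c₂ e₂ : ℝ) :
    (deriv fun y => A₁ * Real.sin (c₁ * y + e₁) + A₂ * Real.sin (c₂ * y + e₂)) =
      fun y => ((A₁ * c₁)) * Real.cos (c₁ * y + e₁) + ((A₂ * c₂)) * Real.cos (c₂ * y + e₂) := by
  funext y; exact ((hd_sin A₁ c₁ e₁ y).add (hd_sin A₂ c₂ e₂ y)).deriv

private lemma iter2_cosD (A c e D : ℝ) :
    (iteratedDeriv 2 fun y => A * Real.cos (c * y + e) + D)
      = fun y => (-(A * c ^ 2)) * Real.cos (c * y + e) := by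
  rw [show (2:ℕ) = 0+1+1 from rfl, iteratedDeriv_succ, iteratedDeriv_succ, iteratedDeriv_zero,
    dcosD, dsin]
  funext y; ring

private lemma iter3_cosD (A c e D : ℝ) :
    (iteratedDeriv 3 fun y => A * Real.cos (c * y + e) + D)
      = fun y => (A * c ^ 3) * Real.sin (c * y + e) := by
  rw [show (3:ℕ) = 0+1+1+1 from rfl, iteratedDeriv_succ, iteratedDeriv_succ, iteratedDeriv_succ,
    iteratedDeriv_zero, dcosD, dsin, dcos]
  funext y; ring

private lemma iter4_cosD (A c e D : ℝ) :
    (iteratedDeriv 4 fun y => A * Real.cos (c * y + e) + D)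
      = fun y => (A * c ^ 4) * Real.cos (c * y + e) := by
  rw [show (4:ℕ) = 0+1+1+1+1 from rfl, iteratedDeriv_succ, iteratedDeriv_succ, iteratedDeriv_succ,
    iteratedDeriv_succ, iteratedDeriv_zero, dcosD, dsin, dcos, dsin]
  funext y; ring

private lemma iter2_cos (A c e : ℝ) :
    (iteratedDeriv 2 fun y => A * Real.cos (c * y + e))
      = fun y => (-(A * c ^ 2)) * Real.cos (c * y + e) := by
  rw [show (2:ℕ) = 0+1+1 from rfl, iteratedDeriv_succ, iteratedDeriv_succ, iteratedDeriv_zero,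
    dcos, dsin]
  funext y; ring

private lemma iter2_ccD (A₁ c₁ e₁ A₂ c₂ e₂ D : ℝ) :
    (iteratedDeriv 2 fun y => A₁ * Real.cos (c₁ * y + e₁) + (A₂ * Real.cos (c₂ * y + e₂) + D))
      = fun y => (-(A₁ * c₁ ^ 2)) * Real.cos (c₁ * y + e₁)
          + (-(A₂ * c₂ ^ 2)) * Real.cos (c₂ * y + e₂) := by
  rw [show (2:ℕ) = 0+1+1 from rfl, iteratedDeriv_succ, iteratedDeriv_succ, iteratedDeriv_zero,
    dccD, dss]
  funext y; ring

theorem cos_solution_solves_eq1 (α γ κ μ a₁ a₂ : ℝ)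
    (hα0 : α ≠ 0) (hα1 : α ≠ 1) (hγ : γ ≠ 0) (hγα : γ / α > 0) :
    ∀ x t : ℝ,
      SolvesEq1 α (α - 1) γ κ μ
        (fun x t => a₂ * Real.cos (Real.sqrt (2 * γ / α) * (x - a₁ * t))
          + (α * (κ - a₁ ^ 2) - 2 * a₁ ^ 2 * γ * μ) / (2 * γ * (1 - α))) x t := by
  intro x t
  simp only [SolvesEq1]
  set c : ℝ := Real.sqrt (2 * γ / α) with hc
  set d : ℝ := (α * (κ - a₁ ^ 2) - 2 * a₁ ^ 2 * γ * μ) / (2 * γ * (1 - α)) with hd0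
  have h2γα : (0:ℝ) < 2 * γ / α := by
    rw [show 2 * γ / α = 2 * (γ / α) by ring]; linarith
  have hc2 : c ^ 2 = 2 * γ / α := Real.sq_sqrt h2γα.le
  have hc2' : α * c ^ 2 = 2 * γ := by rw [hc2]; field_simp
  have h1α : (1:ℝ) - α ≠ 0 := fun h => hα1 (by linarith)
  have hd' : 2 * γ * (1 - α) * d = α * (κ - a₁ ^ 2) - 2 * a₁ ^ 2 * γ * μ := by
    rw [hd0]; field_simp
  -- term 1 : time second derivative
  have e1 : (fun s => a₂ * Real.cos (c * (x - a₁ * s)) + d)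
      = fun s => a₂ * Real.cos ((-(c * a₁)) * s + c * x) + d := by
    funext s; rw [show c * (x - a₁ * s) = (-(c * a₁)) * s + c * x by ring]
  -- term 2 : nonlinear term
  have e2 : (fun y => κ * (a₂ * Real.cos (c * (y - a₁ * t)) + d)
        + γ * (a₂ * Real.cos (c * (y - a₁ * t)) + d) ^ 2)
      = fun y => (γ * a₂ ^ 2 / 2) * Real.cos ((2 * c) * y + 2 * (-(c * (a₁ * t))))
          + ((κ * a₂ + 2 * γ * d * a₂) * Real.cos (c * y + (-(c * (a₁ * t))))
            + (κ * d + γ * d ^ 2 + γ * a₂ ^ 2 / 2)) := by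
    funext y
    rw [show c * (y - a₁ * t) = c * y + (-(c * (a₁ * t))) by ring]
    have h2 : Real.cos ((2 * c) * y + 2 * (-(c * (a₁ * t))))
        = 2 * Real.cos (c * y + (-(c * (a₁ * t)))) ^ 2 - 1 := by
      rw [show (2 * c) * y + 2 * (-(c * (a₁ * t))) = 2 * (c * y + (-(c * (a₁ * t)))) by ring,
        Real.cos_two_mul]
    linear_combination (-(γ * a₂ ^ 2 / 2)) * h2
  -- spatial function rewrite
  have e3 : (fun y => a₂ * Real.cos (c * (y - a₁ * t)) + d)
      = fun y => a₂ * Real.cos (c * y + (-(c * (a₁ * t)))) + d := by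
    funext y; rw [show c * (y - a₁ * t) = c * y + (-(c * (a₁ * t))) by ring]
  -- term 5 inner : mixed derivative
  have e5 : (fun y => iteratedDeriv 2 (fun s => a₂ * Real.cos (c * (y - a₁ * s)) + d) t)
      = fun y => (-(a₂ * (c * a₁) ^ 2)) * Real.cos (c * y + (-(c * (a₁ * t)))) := by
    funext y
    rw [show (fun s => a₂ * Real.cos (c * (y - a₁ * s)) + d)
        = fun s => a₂ * Real.cos ((-(c * a₁)) * s + c * y) + d by
      funext s; rw [show c * (y - a₁ * s) = (-(c * a₁)) * s + c * y by ring]]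
    rw [iter2_cosD]
    beta_reduce
    rw [show (-(c * a₁)) * t + c * y = c * y + (-(c * (a₁ * t))) by ring]
    ring
  rw [e1, e2, e3, e5, iter2_cosD, iter2_ccD, iter4_cosD, iter2_cos, iter3_cosD, dcosD,
    iter2_cosD]
  beta_reduce
  rw [show (-(c * a₁)) * t + c * x = c * x + (-(c * (a₁ * t))) by ring,
    show c * (x - a₁ * t) = c * x + (-(c * (a₁ * t))) by ring]
  set C : ℝ := Real.cos (c * x + (-(c * (a₁ * t)))) with hC
  set S : ℝ := Real.sin (c * x + (-(c * (a₁ * t)))) with hS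
  have hC2 : Real.cos ((2 * c) * x + 2 * (-(c * (a₁ * t)))) = 2 * C ^ 2 - 1 := by
    rw [show (2 * c) * x + 2 * (-(c * (a₁ * t))) = 2 * (c * x + (-(c * (a₁ * t)))) by ring,
      Real.cos_two_mul, hC]
  have hSq : S ^ 2 = 1 - C ^ 2 := by rw [hS, hC, Real.sin_sq]
  apply mul_left_cancel₀ hα0
  linear_combination (2 * α * γ * a₂ ^ 2 * c ^ 2) * hC2 + (α ^ 2 * a₂ ^ 2 * c ^ 4) * hSq
    + (-2 * α * a₂ ^ 2 * c ^ 2 * C ^ 2 + α * a₂ ^ 2 * c ^ 2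
        - (a₂ * c ^ 2 * d + μ * a₁ ^ 2 * a₂ * c ^ 2) * C) * hc2'
    + (-(a₂ * c ^ 2 * C)) * hd'
end

section
/- Let n be a positive integer, let γ > 0, μ, a₁, a₂ be real constants, and set α = 2/n, β = (2 − n)/n, a₃ = √(γ/n), κ = a₁²·(1 + 2γμ) and a₄ = −μ·a₁². Then the function u(x,t) = a₂·(cos(a₃·(x − a₁·t)))ⁿ + a₄ solves equation (1) at every point (x,t) ∈ ℝ². -/
open Real

namespace CosnAux

noncomputable def E (b e : ℝ) (m : ℕ) : ℝ → ℝ := fun y => Real.cos (b * y + e) ^ m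
noncomputable def O (b e : ℝ) (m : ℕ) : ℝ → ℝ := fun y => Real.sin (b * y + e) * Real.cos (b * y + e) ^ m

lemma hasDerivAt_lin (b e y : ℝ) : HasDerivAt (fun y => b * y + e) b y := by
  simpa using ((hasDerivAt_id y).const_mul b).add_const e

lemma hasDerivAt_cosl (b e y : ℝ) :
    HasDerivAt (fun y => Real.cos (b * y + e)) (-Real.sin (b * y + e) * b) y :=
  (hasDerivAt_lin b e y).cos

lemma hasDerivAt_sinl (b e y : ℝ) :
    HasDerivAt (fun y => Real.sin (b * y + e)) (Real.cos (b * y + e) * b) y :=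
  (hasDerivAt_lin b e y).sin

lemma hasDerivAt_E (b e : ℝ) (m : ℕ) (y : ℝ) :
    HasDerivAt (E b e m) (-(b * m) * O b e (m - 1) y) y := by
  have h := (hasDerivAt_cosl b e y).fun_pow m
  unfold E O
  refine h.congr_deriv ?_
  ring

lemma hasDerivAt_O (b e : ℝ) (m : ℕ) (y : ℝ) :
    HasDerivAt (O b e m) (b * ((m + 1) * E b e (m + 1) y - m * E b e (m - 1) y)) y := by
  have h := (hasDerivAt_sinl b e y).fun_mul ((hasDerivAt_cosl b e y).fun_pow m)
  unfold E O
  refine h.congr_deriv ?_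
  cases m with
  | zero => push_cast; ring
  | succ k =>
    push_cast
    linear_combination (-(b * (k + 1) * Real.cos (b * y + e) ^ k)) * (Real.sin_sq_add_cos_sq (b * y + e))
noncomputable def Q1 (b e C : ℝ) (m : ℕ) : ℝ → ℝ := fun y => -(C * b * m) * O b e (m - 1) y

noncomputable def Q2 (b e C : ℝ) (m : ℕ) : ℝ → ℝ := fun y =>
  -(C * b ^ 2 * ((m:ℕ):ℝ) * (((m - 1 + 1 : ℕ)) : ℝ)) * E b e (m - 1 + 1) y
    + (C * b ^ 2 * ((m:ℕ):ℝ) * (((m - 1 : ℕ)) : ℝ)) * E b e (m - 1 - 1) y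

noncomputable def Q3 (b e C : ℝ) (m : ℕ) : ℝ → ℝ := fun y =>
  (C * b ^ 3 * ((m:ℕ):ℝ) * (((m - 1 + 1 : ℕ)) : ℝ) * (((m - 1 + 1 : ℕ)) : ℝ)) * O b e (m - 1 + 1 - 1) y
    - (C * b ^ 3 * ((m:ℕ):ℝ) * (((m - 1 : ℕ)) : ℝ) * (((m - 1 - 1 : ℕ)) : ℝ)) * O b e (m - 1 - 1 - 1) y

noncomputable def Q4 (b e C : ℝ) (m : ℕ) : ℝ → ℝ := fun y =>
  (C * b ^ 4 * ((m:ℕ):ℝ) * (((m - 1 + 1 : ℕ)) : ℝ) * (((m - 1 + 1 : ℕ)) : ℝ) * (((m - 1 + 1 - 1 + 1 : ℕ)) : ℝ)) * E b e (m - 1 + 1 - 1 + 1) y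
    - (C * b ^ 4 * ((m:ℕ):ℝ) * (((m - 1 + 1 : ℕ)) : ℝ) * (((m - 1 + 1 : ℕ)) : ℝ) * (((m - 1 + 1 - 1 : ℕ)) : ℝ)) * E b e (m - 1 + 1 - 1 - 1) y
    - (C * b ^ 4 * ((m:ℕ):ℝ) * (((m - 1 : ℕ)) : ℝ) * (((m - 1 - 1 : ℕ)) : ℝ) * (((m - 1 - 1 - 1 + 1 : ℕ)) : ℝ)) * E b e (m - 1 - 1 - 1 + 1) y
    + (C * b ^ 4 * ((m:ℕ):ℝ) * (((m - 1 : ℕ)) : ℝ) * (((m - 1 - 1 : ℕ)) : ℝ) * (((m - 1 - 1 - 1 : ℕ)) : ℝ)) * E b e (m - 1 - 1 - 1 - 1) y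

lemma hQ01 (b e C : ℝ) (m : ℕ) (y : ℝ) :
    HasDerivAt (fun y => C * E b e m y) (Q1 b e C m y) y := by
  have h := (hasDerivAt_E b e m y).const_mul C
  unfold Q1
  refine h.congr_deriv ?_
  ring

lemma hQ12 (b e C : ℝ) (m : ℕ) (y : ℝ) :
    HasDerivAt (Q1 b e C m) (Q2 b e C m y) y := by
  have h := (hasDerivAt_O b e (m - 1) y).const_mul (-(C * b * m))
  unfold Q1 Q2
  refine h.congr_deriv ?_
  push_cast
  ring

lemma hQ23 (b e C : ℝ) (m : ℕ) (y : ℝ) :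
    HasDerivAt (Q2 b e C m) (Q3 b e C m y) y := by
  have h := ((hasDerivAt_E b e (m - 1 + 1) y).const_mul
      (-(C * b ^ 2 * ((m:ℕ):ℝ) * (((m - 1 + 1 : ℕ)) : ℝ)))).add
    ((hasDerivAt_E b e (m - 1 - 1) y).const_mul (C * b ^ 2 * ((m:ℕ):ℝ) * (((m - 1 : ℕ)) : ℝ)))
  unfold Q2 Q3
  refine h.congr_deriv ?_
  push_cast
  ring

lemma hQ34 (b e C : ℝ) (m : ℕ) (y : ℝ) :
    HasDerivAt (Q3 b e C m) (Q4 b e C m y) y := by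
  have h := ((hasDerivAt_O b e (m - 1 + 1 - 1) y).const_mul
      (C * b ^ 3 * ((m:ℕ):ℝ) * (((m - 1 + 1 : ℕ)) : ℝ) * (((m - 1 + 1 : ℕ)) : ℝ))).sub
    ((hasDerivAt_O b e (m - 1 - 1 - 1) y).const_mul
      (C * b ^ 3 * ((m:ℕ):ℝ) * (((m - 1 : ℕ)) : ℝ) * (((m - 1 - 1 : ℕ)) : ℝ)))
  unfold Q3 Q4
  refine h.congr_deriv ?_
  push_cast
  ring

lemma deriv_eq_of (f g : ℝ → ℝ) (h : ∀ y, HasDerivAt f (g y) y) : deriv f = g :=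
  funext fun y => (h y).deriv

lemma iteratedDeriv_two (f1 f2 f3 : ℝ → ℝ) (h1 : ∀ y, HasDerivAt f1 (f2 y) y)
    (h2 : ∀ y, HasDerivAt f2 (f3 y) y) : iteratedDeriv 2 f1 = f3 := by
  rw [show (2 : ℕ) = 1 + 1 from rfl, iteratedDeriv_succ, iteratedDeriv_one,
    deriv_eq_of f1 f2 h1, deriv_eq_of f2 f3 h2]

lemma iteratedDeriv_three (f1 f2 f3 f4 : ℝ → ℝ) (h1 : ∀ y, HasDerivAt f1 (f2 y) y)
    (h2 : ∀ y, HasDerivAt f2 (f3 y) y) (h3 : ∀ y, HasDerivAt f3 (f4 y) y) :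
    iteratedDeriv 3 f1 = f4 := by
  rw [show (3 : ℕ) = 2 + 1 from rfl, iteratedDeriv_succ, iteratedDeriv_two f1 f2 f3 h1 h2,
    deriv_eq_of f3 f4 h3]

lemma iteratedDeriv_four (f1 f2 f3 f4 f5 : ℝ → ℝ) (h1 : ∀ y, HasDerivAt f1 (f2 y) y)
    (h2 : ∀ y, HasDerivAt f2 (f3 y) y) (h3 : ∀ y, HasDerivAt f3 (f4 y) y)
    (h4 : ∀ y, HasDerivAt f4 (f5 y) y) : iteratedDeriv 4 f1 = f5 := by
  rw [show (4 : ℕ) = 3 + 1 from rfl, iteratedDeriv_succ,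
    iteratedDeriv_three f1 f2 f3 f4 h1 h2 h3, deriv_eq_of f4 f5 h4]

end CosnAux

open CosnAux in
theorem cosn_compacton_profile_solves_eq1 (n : ℕ) (hn : 0 < n)
    (γ μ a₁ a₂ : ℝ) (hγ : 0 < γ) :
    ∀ x t : ℝ,
      SolvesEq1 (2 / (n : ℝ)) ((2 - (n : ℝ)) / (n : ℝ)) γ
        (a₁ ^ 2 * (1 + 2 * γ * μ)) μ
        (fun x t =>
          a₂ * (Real.cos (Real.sqrt (γ / (n : ℝ)) * (x - a₁ * t))) ^ n
            + (-μ * a₁ ^ 2)) x t := by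
  intro x t
  have hn0 : (n : ℝ) ≠ 0 := Nat.cast_ne_zero.mpr hn.ne'
  simp only [SolvesEq1]
  set c := Real.sqrt (γ / (n : ℝ)) with hcdef
  have hc2 : c ^ 2 = γ / (n : ℝ) := Real.sq_sqrt (by positivity)
  set κ := a₁ ^ 2 * (1 + 2 * γ * μ) with hκdef
  set d : ℝ := -μ * a₁ ^ 2 with hddef
  -- the spatial profile
  have harg : ∀ y : ℝ, c * (y - a₁ * t) = c * y + -(c * (a₁ * t)) := fun y => by ring
  have hu : (fun y => a₂ * Real.cos (c * (y - a₁ * t)) ^ n + d)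
      = fun y => a₂ * E c (-(c * (a₁ * t))) n y + d := by
    funext y; unfold E; rw [harg y]
  -- the temporal second derivative at arbitrary base point
  have hT : ∀ Y T : ℝ,
      iteratedDeriv 2 (fun s => a₂ * Real.cos (c * (Y - a₁ * s)) ^ n + d) T
        = Q2 (-(c * a₁)) (c * Y) a₂ n T := by
    intro Y T
    have hfun : (fun s => a₂ * Real.cos (c * (Y - a₁ * s)) ^ n + d)
        = fun s => a₂ * E (-(c * a₁)) (c * Y) n s + d := by
      funext s; unfold E; rw [show c * (Y - a₁ * s) = -(c * a₁) * s + c * Y from by ring]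
    rw [hfun, iteratedDeriv_two _ (Q1 (-(c * a₁)) (c * Y) a₂ n) (Q2 (-(c * a₁)) (c * Y) a₂ n)
      (fun s => (hQ01 _ _ _ _ s).add_const d) (fun s => hQ12 _ _ _ _ s)]
  rw [hu, hT x t]
  -- mixed term
  have hM0 : (fun y => iteratedDeriv 2 (fun s => a₂ * Real.cos (c * (y - a₁ * s)) ^ n + d) t)
      = fun y => -(a₂ * (-(c * a₁)) ^ 2 * ((n:ℕ):ℝ) * (((n - 1 + 1 : ℕ)) : ℝ))
            * E c (-(c * (a₁ * t))) (n - 1 + 1) y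
          + (a₂ * (-(c * a₁)) ^ 2 * ((n:ℕ):ℝ) * (((n - 1 : ℕ)) : ℝ))
            * E c (-(c * (a₁ * t))) (n - 1 - 1) y := by
    funext y
    rw [hT y t]
    simp only [Q2, E]
    rw [show -(c * a₁) * t + c * y = c * y + -(c * (a₁ * t)) from by ring]
  rw [hM0]
  -- nonlinear term function
  have hH0 : (fun y => κ * (a₂ * Real.cos (c * (y - a₁ * t)) ^ n + d)
        + γ * (a₂ * Real.cos (c * (y - a₁ * t)) ^ n + d) ^ 2)
      = fun y => (γ * a₂ ^ 2) * E c (-(c * (a₁ * t))) (2 * n) y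
          + ((κ + 2 * γ * d) * a₂) * E c (-(c * (a₁ * t))) n y + (κ * d + γ * d ^ 2) := by
    funext y; unfold E; rw [harg y]; ring
  rw [hH0]
  -- iterated derivatives via the chains
  rw [iteratedDeriv_four _ (Q1 c (-(c * (a₁ * t))) a₂ n) (Q2 c (-(c * (a₁ * t))) a₂ n)
      (Q3 c (-(c * (a₁ * t))) a₂ n) (Q4 c (-(c * (a₁ * t))) a₂ n)
      (fun y => (hQ01 _ _ _ _ y).add_const d) (fun y => hQ12 _ _ _ _ y)
      (fun y => hQ23 _ _ _ _ y) (fun y => hQ34 _ _ _ _ y)]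
  rw [iteratedDeriv_three _ (Q1 c (-(c * (a₁ * t))) a₂ n) (Q2 c (-(c * (a₁ * t))) a₂ n)
      (Q3 c (-(c * (a₁ * t))) a₂ n)
      (fun y => (hQ01 _ _ _ _ y).add_const d) (fun y => hQ12 _ _ _ _ y)
      (fun y => hQ23 _ _ _ _ y)]
  rw [iteratedDeriv_two _ (Q1 c (-(c * (a₁ * t))) a₂ n) (Q2 c (-(c * (a₁ * t))) a₂ n)
      (fun y => (hQ01 _ _ _ _ y).add_const d) (fun y => hQ12 _ _ _ _ y)]
  rw [deriv_eq_of _ (Q1 c (-(c * (a₁ * t))) a₂ n) (fun y => (hQ01 _ _ _ _ y).add_const d)]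
  rw [iteratedDeriv_two _
      (fun y => Q1 c (-(c * (a₁ * t))) (γ * a₂ ^ 2) (2 * n) y
        + Q1 c (-(c * (a₁ * t))) ((κ + 2 * γ * d) * a₂) n y)
      (fun y => Q2 c (-(c * (a₁ * t))) (γ * a₂ ^ 2) (2 * n) y
        + Q2 c (-(c * (a₁ * t))) ((κ + 2 * γ * d) * a₂) n y)
      (fun y => ((hQ01 _ _ _ _ y).fun_add (hQ01 _ _ _ _ y)).add_const _)
      (fun y => (hQ12 _ _ _ _ y).fun_add (hQ12 _ _ _ _ y))]
  rw [iteratedDeriv_two _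
      (fun y => Q1 c (-(c * (a₁ * t))) (-(a₂ * (-(c * a₁)) ^ 2 * ((n:ℕ):ℝ) * (((n - 1 + 1 : ℕ)) : ℝ))) (n - 1 + 1) y
        + Q1 c (-(c * (a₁ * t))) (a₂ * (-(c * a₁)) ^ 2 * ((n:ℕ):ℝ) * (((n - 1 : ℕ)) : ℝ)) (n - 1 - 1) y)
      (fun y => Q2 c (-(c * (a₁ * t))) (-(a₂ * (-(c * a₁)) ^ 2 * ((n:ℕ):ℝ) * (((n - 1 + 1 : ℕ)) : ℝ))) (n - 1 + 1) y
        + Q2 c (-(c * (a₁ * t))) (a₂ * (-(c * a₁)) ^ 2 * ((n:ℕ):ℝ) * (((n - 1 : ℕ)) : ℝ)) (n - 1 - 1) y)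
      (fun y => (hQ01 _ _ _ _ y).fun_add (hQ01 _ _ _ _ y))
      (fun y => (hQ12 _ _ _ _ y).fun_add (hQ12 _ _ _ _ y))]
  simp only [Q1, Q2, Q3, Q4, E, O]
  rw [show -(c * a₁) * t + c * x = c * x + -(c * (a₁ * t)) from by ring,
     show c * (x - a₁ * t) = c * x + -(c * (a₁ * t)) from by ring]
  have hγ' : γ = (n : ℝ) * c ^ 2 := by rw [hc2]; field_simp
  set w := Real.cos (c * x + -(c * (a₁ * t))) with hw
  set sθ := Real.sin (c * x + -(c * (a₁ * t))) with hs
  have hsw : sθ ^ 2 = 1 - w ^ 2 := by rw [hs, hw]; exact Real.sin_sq _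
  rw [hκdef, hddef, hγ']
  obtain ⟨m, rfl⟩ | h3 : (∃ m, n = m + 4) ∨ n < 4 := by
    rcases Nat.lt_or_ge n 4 with h | h
    · exact Or.inr h
    · exact Or.inl ⟨n - 4, by omega⟩
  · simp only [Nat.add_sub_cancel, show m + 4 - 1 = m + 3 from by omega,
      show m + 3 - 1 = m + 2 from by omega, show m + 2 - 1 = m + 1 from by omega,
      show m + 1 - 1 = m from by omega, show 2 * (m + 4) = 2 * m + 8 from by omega,
      show 2 * m + 8 - 1 = 2 * m + 7 from by omega,
      show 2 * m + 7 - 1 = 2 * m + 6 from by omega]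
    push_cast
    linear_combination (norm := (field_simp; ring))
      (2 * a₂ ^ 2 * c ^ 4 * ((m : ℝ) + 4) ^ 3 * w ^ (2 * m + 6)
        - 2 * a₂ ^ 2 * c ^ 4 * ((m : ℝ) + 4) * ((m : ℝ) + 3) * ((m : ℝ) + 2) * w ^ (2 * m + 4)) * hsw
  · interval_cases n
    · norm_num
      linear_combination (2 * a₂ ^ 2 * c ^ 4) * hsw
    · norm_num
      linear_combination (16 * a₂ ^ 2 * c ^ 4 * w ^ 2) * hsw
    · norm_num
      linear_combination (54 * a₂ ^ 2 * c ^ 4 * w ^ 4 - 12 * a₂ ^ 2 * c ^ 4 * w ^ 2) * hsw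
end

section
/- Let γ < 0, μ, a₁, a₂ be real constants, set α = −1, β = −2, a₃ = √(−γ/2), κ = a₁²·(1 + 2γμ) and a₄ = −(2a₂ + 3a₁²·μ)/3. Then the function u(x,t) = a₂·(sech(a₃·(x − a₁·t)))² + a₄ solves equation (1) at every point (x,t) ∈ ℝ². -/
open Real

lemma hdEven (A B C c d : ℝ) (x : ℝ) :
    HasDerivAt (fun y : ℝ => A * (1 / Real.cosh (c * y + d)) ^ 2
        + B * (1 / Real.cosh (c * y + d)) ^ 4 + C)
      ((-2*A*c) * (Real.sinh (c*x+d) * (1 / Real.cosh (c*x+d)) ^ 3)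
        + (-4*B*c) * (Real.sinh (c*x+d) * (1 / Real.cosh (c*x+d)) ^ 5)) x := by
  have hL : HasDerivAt (fun y : ℝ => c * y + d) c x := by
    simpa using ((hasDerivAt_id x).const_mul c).add_const d
  have hcosh : HasDerivAt (fun y : ℝ => Real.cosh (c * y + d))
      (Real.sinh (c*x+d) * c) x := hL.cosh
  have hne : Real.cosh (c*x+d) ≠ 0 := (Real.cosh_pos _).ne'
  have hinv : HasDerivAt (fun y : ℝ => 1 / Real.cosh (c * y + d))
      ((-c) * Real.sinh (c*x+d) * (1 / Real.cosh (c*x+d)) ^ 2) x := by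
    have := hcosh.inv hne
    simp only [one_div]
    refine this.congr_deriv ?_
    field_simp
  have h2 := (hinv.pow 2).const_mul A
  have h4 := (hinv.pow 4).const_mul B
  have h := (h2.add h4).add_const C
  refine h.congr_deriv ?_
  norm_num
  ring

lemma hdOdd (A B c d : ℝ) (x : ℝ) :
    HasDerivAt (fun y : ℝ => A * (Real.sinh (c*y+d) * (1 / Real.cosh (c*y+d)) ^ 3)
        + B * (Real.sinh (c*y+d) * (1 / Real.cosh (c*y+d)) ^ 5))
      ((A*(-2*c)) * (1 / Real.cosh (c*x+d)) ^ 2 + (A*(3*c)+B*(-4*c)) * (1 / Real.cosh (c*x+d)) ^ 4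
        + (B*(5*c)) * (1 / Real.cosh (c*x+d)) ^ 6) x := by
  have hL : HasDerivAt (fun y : ℝ => c * y + d) c x := by
    simpa using ((hasDerivAt_id x).const_mul c).add_const d
  have hcosh : HasDerivAt (fun y : ℝ => Real.cosh (c * y + d))
      (Real.sinh (c*x+d) * c) x := hL.cosh
  have hsinh : HasDerivAt (fun y : ℝ => Real.sinh (c * y + d))
      (Real.cosh (c*x+d) * c) x := hL.sinh
  have hne : Real.cosh (c*x+d) ≠ 0 := (Real.cosh_pos _).ne'
  have hinv : HasDerivAt (fun y : ℝ => 1 / Real.cosh (c * y + d))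
      ((-c) * Real.sinh (c*x+d) * (1 / Real.cosh (c*x+d)) ^ 2) x := by
    have := hcosh.inv hne
    simp only [one_div]
    refine this.congr_deriv ?_
    field_simp
  have h3 := (hsinh.mul (hinv.pow 3)).const_mul A
  have h5 := (hsinh.mul (hinv.pow 5)).const_mul B
  have h := h3.add h5
  refine h.congr_deriv ?_
  symm
  norm_num
  set z := c*x+d
  set iz := 1 / Real.cosh z with hiz
  have hi : Real.cosh z * iz = 1 := by rw [hiz]; field_simp
  have hs : Real.sinh z ^ 2 = Real.cosh z ^ 2 - 1 := by
    have := Real.cosh_sq z; linarith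
  linear_combination (3*A*c*iz^4 + 5*B*c*iz^6) * hs
    + (5*A*c*iz^2 + 3*A*c*iz^2*(Real.cosh z*iz-1) + 9*B*c*iz^4 + 5*B*c*iz^4*(Real.cosh z*iz-1)) * hi

lemma derivEven (A B C c d : ℝ) :
    deriv (fun y : ℝ => A * (1 / Real.cosh (c * y + d)) ^ 2
        + B * (1 / Real.cosh (c * y + d)) ^ 4 + C)
    = fun x => (-2*A*c) * (Real.sinh (c*x+d) * (1 / Real.cosh (c*x+d)) ^ 3)
        + (-4*B*c) * (Real.sinh (c*x+d) * (1 / Real.cosh (c*x+d)) ^ 5) :=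
  funext fun x => (hdEven A B C c d x).deriv

lemma derivOdd (A B c d : ℝ) :
    deriv (fun y : ℝ => A * (Real.sinh (c*y+d) * (1 / Real.cosh (c*y+d)) ^ 3)
        + B * (Real.sinh (c*y+d) * (1 / Real.cosh (c*y+d)) ^ 5))
    = fun x => (A*(-2*c)) * (1 / Real.cosh (c*x+d)) ^ 2 + (A*(3*c)+B*(-4*c)) * (1 / Real.cosh (c*x+d)) ^ 4
        + (B*(5*c)) * (1 / Real.cosh (c*x+d)) ^ 6 :=
  funext fun x => (hdOdd A B c d x).deriv

lemma itd2 (f : ℝ → ℝ) : iteratedDeriv 2 f = deriv (deriv f) := by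
  rw [show (2:ℕ) = 1+1 from rfl, iteratedDeriv_succ, iteratedDeriv_one]

lemma itd3 (f : ℝ → ℝ) : iteratedDeriv 3 f = deriv (deriv (deriv f)) := by
  rw [show (3:ℕ) = 2+1 from rfl, iteratedDeriv_succ, itd2]

lemma itd4 (f : ℝ → ℝ) : iteratedDeriv 4 f = deriv (deriv (deriv (deriv f))) := by
  rw [show (4:ℕ) = 3+1 from rfl, iteratedDeriv_succ, itd3]

lemma deriv2Even0 (A C c d : ℝ) :
    deriv (deriv (fun y : ℝ => A * (1 / Real.cosh (c * y + d)) ^ 2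
        + 0 * (1 / Real.cosh (c * y + d)) ^ 4 + C))
    = fun x => (4*A*c^2) * (1 / Real.cosh (c*x+d)) ^ 2
        + (-6*A*c^2) * (1 / Real.cosh (c*x+d)) ^ 4 + 0 := by
  rw [derivEven, derivOdd]
  funext y; ring


theorem sech_squared_soliton_solves_eq1 (γ μ a₁ a₂ : ℝ) (hγ : γ < 0) :
    ∀ x t : ℝ,
      SolvesEq1 (-1) (-2) γ (a₁ ^ 2 * (1 + 2 * γ * μ)) μ
        (fun x t =>
          a₂ * (1 / Real.cosh (Real.sqrt (-γ / 2) * (x - a₁ * t))) ^ 2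
            + (-(2 * a₂ + 3 * a₁ ^ 2 * μ) / 3)) x t := by
  intro x t
  have h2γ : (0:ℝ) ≤ -γ/2 := by linarith
  unfold SolvesEq1
  simp only [itd2, itd3, itd4]
  set c := Real.sqrt (-γ / 2) with hcdef
  set A4 : ℝ := -(2 * a₂ + 3 * a₁ ^ 2 * μ) / 3 with hA4
  have ht : ∀ z : ℝ, (fun s : ℝ => a₂ * (1 / Real.cosh (c * (z - a₁ * s))) ^ 2 + A4)
      = fun s : ℝ => a₂ * (1 / Real.cosh ((-(c * a₁)) * s + c * z)) ^ 2
          + 0 * (1 / Real.cosh ((-(c * a₁)) * s + c * z)) ^ 4 + A4 := by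
    intro z; funext s
    rw [show c * (z - a₁ * s) = (-(c * a₁)) * s + c * z by ring]; ring
  have hx : (fun y : ℝ => a₂ * (1 / Real.cosh (c * (y - a₁ * t))) ^ 2 + A4)
      = fun y : ℝ => a₂ * (1 / Real.cosh (c * y + (-(c * a₁)) * t)) ^ 2
          + 0 * (1 / Real.cosh (c * y + (-(c * a₁)) * t)) ^ 4 + A4 := by
    funext y
    rw [show c * (y - a₁ * t) = c * y + (-(c * a₁)) * t by ring]; ring
  have hG : (fun y : ℝ => a₁ ^ 2 * (1 + 2 * γ * μ) *
        (a₂ * (1 / Real.cosh (c * (y - a₁ * t))) ^ 2 + A4) +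
        γ * (a₂ * (1 / Real.cosh (c * (y - a₁ * t))) ^ 2 + A4) ^ 2)
      = fun y : ℝ => (a₁ ^ 2 * (1 + 2 * γ * μ) * a₂ + 2 * γ * A4 * a₂) *
            (1 / Real.cosh (c * y + (-(c * a₁)) * t)) ^ 2
          + (γ * a₂ ^ 2) * (1 / Real.cosh (c * y + (-(c * a₁)) * t)) ^ 4
          + (a₁ ^ 2 * (1 + 2 * γ * μ) * A4 + γ * A4 ^ 2) := by
    funext y
    rw [show c * (y - a₁ * t) = c * y + (-(c * a₁)) * t by ring]; ring
  rw [hG]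
  simp only [hx, ht]
  simp only [deriv2Even0]
  have hM : (fun y : ℝ => 4 * a₂ * (-(c * a₁)) ^ 2 * (1 / Real.cosh (-(c * a₁) * t + c * y)) ^ 2 +
        -6 * a₂ * (-(c * a₁)) ^ 2 * (1 / Real.cosh (-(c * a₁) * t + c * y)) ^ 4 + 0)
      = fun y : ℝ => (4 * a₂ * (c * a₁) ^ 2) * (1 / Real.cosh (c * y + -(c * a₁) * t)) ^ 2
          + (-6 * a₂ * (c * a₁) ^ 2) * (1 / Real.cosh (c * y + -(c * a₁) * t)) ^ 4 + 0 := by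
    funext y
    rw [show -(c * a₁) * t + c * y = c * y + -(c * a₁) * t by ring]; ring
  rw [hM]
  simp only [derivEven, derivOdd]
  rw [show -(c * a₁) * t + c * x = c * x + -(c * a₁) * t by ring,
      show c * (x - a₁ * t) = c * x + -(c * a₁) * t by ring]
  have hc2 : c ^ 2 = -γ / 2 := Real.sq_sqrt h2γ
  have hγ2 : γ = -(2 * c ^ 2) := by rw [hc2]; ring
  have hne : Real.cosh (-(c * a₁ * t) + c * x) ≠ 0 := (Real.cosh_pos _).ne'
  have hs : Real.sinh (-(c * a₁ * t) + c * x) ^ 2 = Real.cosh (-(c * a₁ * t) + c * x) ^ 2 - 1 := by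
    have := Real.cosh_sq (-(c * a₁ * t) + c * x); linarith
  rw [hγ2, hA4]
  ring_nf
  rw [hs]
  field_simp
  ring
end

section
/- Let α, β, γ, c₁ be real constants and set κ = 0 and μ = 0. Let ψ : ℝ → ℝ be twice continuously differentiable with ψ″(t) = 6c₁·ψ(t)² for all t (as holds for any solution of (ψ′)² = 4c₁ψ³ + c₂), and let w : ℝ → ℝ be four times continuously differentiable and satisfy w·w⁗ + α·w′·w‴ + β·(w″)² + 2γ·(w·w″ + (w′)²) − 6c₁·w = 0 on ℝ. Then the function u(x,t) = w(x)·ψ(t) solves equation (1) at every point (x,t) ∈ ℝ². -/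
lemma itd_const_mul (n : ℕ) (c : ℝ) (f : ℝ → ℝ) (hf : ContDiff ℝ n f) :
    iteratedDeriv n (fun x => c * f x) = fun x => c * iteratedDeriv n f x := by
  induction n with
  | zero => simp [iteratedDeriv_zero]
  | succ n ih =>
    rw [iteratedDeriv_succ, ih hf.of_succ]
    funext x
    rw [deriv_const_mul _ ((hf.differentiable_iteratedDeriv n
      (Nat.cast_lt.mpr n.lt_succ_self)).differentiableAt), iteratedDeriv_succ]

theorem separable_reduction_mu_zero_solves_eq1 (α β γ c₁ : ℝ)
    (ψ w : ℝ → ℝ) (hψ : ContDiff ℝ 2 ψ)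
    (hψeq : ∀ t : ℝ, iteratedDeriv 2 ψ t = 6 * c₁ * (ψ t) ^ 2)
    (hw : ContDiff ℝ 4 w)
    (hODE : ∀ z : ℝ,
      w z * iteratedDeriv 4 w z
        + α * deriv w z * iteratedDeriv 3 w z
        + β * (iteratedDeriv 2 w z) ^ 2
        + 2 * γ * (w z * iteratedDeriv 2 w z + (deriv w z) ^ 2)
        - 6 * c₁ * w z = 0) :
    ∀ x t : ℝ, SolvesEq1 α β γ 0 0 (fun x t => w x * ψ t) x t := by
  intro x t
  unfold SolvesEq1
  simp only [zero_mul, add_zero, zero_add]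
  have hw1 : Differentiable ℝ w := hw.differentiable (by norm_num)
  have hw' : Differentiable ℝ (deriv w) := by
    have := (hw.iterate_deriv' 3 1)
    exact this.differentiable (by norm_num)
  -- time derivative
  have hT : iteratedDeriv 2 (fun s => w x * ψ s) t = w x * (6 * c₁ * (ψ t) ^ 2) := by
    have := congrFun (itd_const_mul 2 (w x) ψ hψ) t
    simpa [hψeq t] using this
  -- rewrite x-dependent functions
  have hfun : (fun y => w y * ψ t) = fun y => ψ t * w y := by
    funext y; ring
  have hfun2 : (fun y => γ * (w y * ψ t) ^ 2)
      = fun y => (γ * (ψ t) ^ 2) * (w y) ^ 2 := by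
    funext y; ring
  have hwsq : ContDiff ℝ 2 (fun y => (w y) ^ 2) := (hw.of_le (by norm_num)).pow 2
  -- second derivative of w²
  have hd1 : deriv (fun y => (w y) ^ 2) = fun y => 2 * (w y * deriv w y) := by
    funext y
    rw [deriv_fun_pow (hw1 y) 2]
    simp only [Nat.reduceSub, Nat.cast_ofNat, pow_one]
    ring
  have hwsq2 : iteratedDeriv 2 (fun y => (w y) ^ 2) x
      = 2 * ((deriv w x) ^ 2 + w x * iteratedDeriv 2 w x) := by
    rw [iteratedDeriv_succ, iteratedDeriv_one, hd1]
    rw [deriv_const_mul _ (show DifferentiableAt ℝ (fun y => w y * deriv w y) x from ((hw1 x)).mul ((hw' x)))]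
    rw [deriv_fun_mul (hw1 x) (hw' x)]
    rw [show iteratedDeriv 2 w x = deriv (deriv w) x by
      rw [iteratedDeriv_succ, iteratedDeriv_one]]
    ring
  rw [hT, hfun2, hfun,
    itd_const_mul 2 _ _ hwsq,
    itd_const_mul 4 (ψ t) w hw,
    itd_const_mul 3 (ψ t) w (hw.of_le (by norm_num)),
    itd_const_mul 2 (ψ t) w (hw.of_le (by norm_num))]
  have hder : deriv (fun y => ψ t * w y) x = ψ t * deriv w x := by
    rw [deriv_const_mul _ (hw1 x)]
  simp only [hder, hwsq2]
  linear_combination (-(ψ t) ^ 2) * hODE x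
end

section
/- Let κ be a real constant and set γ = 0, α = −2, β = 1 and μ = 1. Let A, B : ℝ → ℝ be twice continuously differentiable with A″(t) = −κ·A(t) and B″(t) = −κ·B(t) for all t, suppose A(t)² + B(t)² > 0 for all t, and let w : ℝ → ℝ be an arbitrary twice continuously differentiable function. Then the function u(x,t) = ½·√(A(t)² + B(t)²)·sinh(x + w(t)) − κ + ½·(A(t)·sin x + B(t)·cos x) solves equation (1) at every point (x,t) ∈ ℝ². -/
lemma twice_diff' {f : ℝ → ℝ} (hf : ContDiff ℝ 2 f) :
    Differentiable ℝ f ∧ Differentiable ℝ (deriv f) := by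
  rw [show ((2:WithTop ℕ∞)) = 1 + 1 by norm_num, contDiff_succ_iff_deriv] at hf
  exact ⟨hf.1, hf.2.2.differentiable one_ne_zero⟩

lemma base_hasDerivAt (p q r s k c y : ℝ) :
    HasDerivAt (fun z => p * Real.sinh (z + c) + q * Real.cosh (z + c)
        + r * Real.sin z + s * Real.cos z + k)
      (q * Real.sinh (y + c) + p * Real.cosh (y + c)
        + (-s) * Real.sin y + r * Real.cos y + 0) y := by
  have h1 : HasDerivAt (fun z : ℝ => z + c) 1 y := (hasDerivAt_id y).add_const c
  have hs : HasDerivAt (fun z => Real.sinh (z + c)) (Real.cosh (y + c)) y := by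
    simpa using h1.sinh
  have hc : HasDerivAt (fun z => Real.cosh (z + c)) (Real.sinh (y + c)) y := by
    simpa using h1.cosh
  have := ((((hs.const_mul p).add (hc.const_mul q)).add
      ((Real.hasDerivAt_sin y).const_mul r)).add
      ((Real.hasDerivAt_cos y).const_mul s)).add_const k
  refine this.congr_deriv ?_
  ring

lemma deriv_base (p q r s k c : ℝ) :
    deriv (fun z => p * Real.sinh (z + c) + q * Real.cosh (z + c)
        + r * Real.sin z + s * Real.cos z + k)
    = fun y => q * Real.sinh (y + c) + p * Real.cosh (y + c)
        + (-s) * Real.sin y + r * Real.cos y + 0 :=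
  funext fun y => (base_hasDerivAt p q r s k c y).deriv

lemma iter2_base (p q r s k c : ℝ) :
    iteratedDeriv 2 (fun z => p * Real.sinh (z + c) + q * Real.cosh (z + c)
        + r * Real.sin z + s * Real.cos z + k)
    = fun y => p * Real.sinh (y + c) + q * Real.cosh (y + c)
        + (-r) * Real.sin y + (-s) * Real.cos y + 0 := by
  rw [iteratedDeriv_succ, iteratedDeriv_one, deriv_base, deriv_base]

lemma iter3_base (p q r s k c : ℝ) :
    iteratedDeriv 3 (fun z => p * Real.sinh (z + c) + q * Real.cosh (z + c)
        + r * Real.sin z + s * Real.cos z + k)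
    = fun y => q * Real.sinh (y + c) + p * Real.cosh (y + c)
        + s * Real.sin y + (-r) * Real.cos y + 0 := by
  rw [show (3:ℕ) = 2 + 1 from rfl, iteratedDeriv_succ, iter2_base, deriv_base]
  simp

lemma iter4_base (p q r s k c : ℝ) :
    iteratedDeriv 4 (fun z => p * Real.sinh (z + c) + q * Real.cosh (z + c)
        + r * Real.sin z + s * Real.cos z + k)
    = fun y => p * Real.sinh (y + c) + q * Real.cosh (y + c)
        + r * Real.sin y + s * Real.cos y + 0 := by
  rw [show (4:ℕ) = 3 + 1 from rfl, iteratedDeriv_succ, iter3_base, deriv_base]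
  simp

lemma key_solves (κ : ℝ) (A B w R : ℝ → ℝ)
    (hA : ContDiff ℝ 2 A) (hB : ContDiff ℝ 2 B) (hw : ContDiff ℝ 2 w)
    (hR : ContDiff ℝ 2 R)
    (hAeq : ∀ t : ℝ, iteratedDeriv 2 A t = -κ * A t)
    (hBeq : ∀ t : ℝ, iteratedDeriv 2 B t = -κ * B t)
    (hRsq : ∀ t : ℝ, R t ^ 2 = (A t) ^ 2 + (B t) ^ 2) :
    ∀ x t : ℝ,
      SolvesEq1 (-2) 1 0 κ 1
        (fun x t => (1 / 2) * R t * Real.sinh (x + w t)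
            - κ + (1 / 2) * (A t * Real.sin x + B t * Real.cos x)) x t := by
  intro x t
  obtain ⟨hA0, hA1⟩ := twice_diff' hA
  obtain ⟨hB0, hB1⟩ := twice_diff' hB
  obtain ⟨hw0, hw1⟩ := twice_diff' hw
  obtain ⟨hR0, hR1⟩ := twice_diff' hR
  -- second t-derivative, for arbitrary x coordinate y
  have htt : ∀ y : ℝ,
      iteratedDeriv 2 (fun s => (1 / 2) * R s * Real.sinh (y + w s)
          - κ + (1 / 2) * (A s * Real.sin y + B s * Real.cos y)) t
      = (1/2 * deriv (deriv R) t + 1/2 * R t * (deriv w t)^2) * Real.sinh (y + w t)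
        + (deriv R t * deriv w t + 1/2 * R t * deriv (deriv w) t) * Real.cosh (y + w t)
        + (1/2 * deriv (deriv A) t) * Real.sin y
        + (1/2 * deriv (deriv B) t) * Real.cos y + 0 := by
    intro y
    rw [iteratedDeriv_succ, iteratedDeriv_one]
    have hder : deriv (fun s => (1 / 2) * R s * Real.sinh (y + w s)
          - κ + (1 / 2) * (A s * Real.sin y + B s * Real.cos y))
        = fun s => (1/2 * deriv R s * Real.sinh (y + w s)
            + 1/2 * R s * (Real.cosh (y + w s) * deriv w s))
          + 1/2 * (deriv A s * Real.sin y + deriv B s * Real.cos y) := by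
      funext s
      have hws : HasDerivAt (fun s' => y + w s') (deriv w s) s :=
        ((hw0 s).hasDerivAt).const_add y
      have H : HasDerivAt (fun s => (1 / 2) * R s * Real.sinh (y + w s)
          - κ + (1 / 2) * (A s * Real.sin y + B s * Real.cos y))
          ((1/2 * deriv R s * Real.sinh (y + w s)
            + 1/2 * R s * (Real.cosh (y + w s) * deriv w s))
          + 1/2 * (deriv A s * Real.sin y + deriv B s * Real.cos y)) s := by
        exact ((((hR0 s).hasDerivAt.const_mul (1/2:ℝ)).mul hws.sinh).sub_const κ).add
          ((((hA0 s).hasDerivAt.mul_const (Real.sin y)).add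
            ((hB0 s).hasDerivAt.mul_const (Real.cos y))).const_mul (1/2:ℝ))
      exact H.deriv
    rw [hder]
    have hws : HasDerivAt (fun s' => y + w s') (deriv w t) t :=
      ((hw0 t).hasDerivAt).const_add y
    have H : HasDerivAt (fun s => (1/2 * deriv R s * Real.sinh (y + w s)
          + 1/2 * R s * (Real.cosh (y + w s) * deriv w s))
        + 1/2 * (deriv A s * Real.sin y + deriv B s * Real.cos y))
        (((1/2 * deriv (deriv R) t * Real.sinh (y + w t)
            + 1/2 * deriv R t * (Real.cosh (y + w t) * deriv w t))
          + (1/2 * deriv R t * (Real.cosh (y + w t) * deriv w t)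
            + 1/2 * R t * ((Real.sinh (y + w t) * deriv w t) * deriv w t
              + Real.cosh (y + w t) * deriv (deriv w) t)))
        + 1/2 * (deriv (deriv A) t * Real.sin y + deriv (deriv B) t * Real.cos y)) t := by
      exact ((((hR1 t).hasDerivAt.const_mul (1/2:ℝ)).mul hws.sinh).add
          (((hR0 t).hasDerivAt.const_mul (1/2:ℝ)).mul
            (hws.cosh.mul (hw1 t).hasDerivAt))).add
        ((((hA1 t).hasDerivAt.mul_const (Real.sin y)).add
          ((hB1 t).hasDerivAt.mul_const (Real.cos y))).const_mul (1/2:ℝ))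
    rw [H.deriv]
    ring
  have hA2 : deriv (deriv A) t = -κ * A t := by
    have := hAeq t; rwa [iteratedDeriv_succ, iteratedDeriv_one] at this
  have hB2 : deriv (deriv B) t = -κ * B t := by
    have := hBeq t; rwa [iteratedDeriv_succ, iteratedDeriv_one] at this
  have hu : (fun y => (1 / 2) * R t * Real.sinh (y + w t)
        - κ + (1 / 2) * (A t * Real.sin y + B t * Real.cos y))
      = fun y => (1/2 * R t) * Real.sinh (y + w t) + 0 * Real.cosh (y + w t)
        + (1/2 * A t) * Real.sin y + (1/2 * B t) * Real.cos y + (-κ) := by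
    funext y; ring
  have hku : (fun y => κ * ((1 / 2) * R t * Real.sinh (y + w t)
        - κ + (1 / 2) * (A t * Real.sin y + B t * Real.cos y))
        + 0 * ((1 / 2) * R t * Real.sinh (y + w t)
        - κ + (1 / 2) * (A t * Real.sin y + B t * Real.cos y)) ^ 2)
      = fun y => (κ/2 * R t) * Real.sinh (y + w t) + 0 * Real.cosh (y + w t)
        + (κ/2 * A t) * Real.sin y + (κ/2 * B t) * Real.cos y + (-(κ^2)) := by
    funext y; ring
  have hxxtt : (fun y => iteratedDeriv 2 (fun s => (1 / 2) * R s * Real.sinh (y + w s)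
        - κ + (1 / 2) * (A s * Real.sin y + B s * Real.cos y)) t)
      = fun y => (1/2 * deriv (deriv R) t + 1/2 * R t * (deriv w t)^2) * Real.sinh (y + w t)
        + (deriv R t * deriv w t + 1/2 * R t * deriv (deriv w) t) * Real.cosh (y + w t)
        + (1/2 * deriv (deriv A) t) * Real.sin y
        + (1/2 * deriv (deriv B) t) * Real.cos y + 0 := funext fun y => htt y
  simp only [SolvesEq1]
  rw [htt x, hxxtt, hku, iter2_base, hu, deriv_base, iter2_base, iter3_base, iter4_base,
    iter2_base]
  simp only []
  have hch := Real.cosh_sq (x + w t)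
  have hsc := Real.sin_sq_add_cos_sq x
  have hR2 := hRsq t
  rw [hA2, hB2]
  linear_combination (1/2 * R t ^ 2) * hch - (1/2 * ((A t)^2 + (B t)^2)) * hsc
    + (1/2) * hR2

theorem singular_nonclassical_case_f_solves_eq1 (κ : ℝ)
    (A B w : ℝ → ℝ)
    (hA : ContDiff ℝ 2 A) (hB : ContDiff ℝ 2 B)
    (hAeq : ∀ t : ℝ, iteratedDeriv 2 A t = -κ * A t)
    (hBeq : ∀ t : ℝ, iteratedDeriv 2 B t = -κ * B t)
    (hpos : ∀ t : ℝ, 0 < (A t) ^ 2 + (B t) ^ 2)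
    (hw : ContDiff ℝ 2 w) :
    ∀ x t : ℝ,
      SolvesEq1 (-2) 1 0 κ 1
        (fun x t =>
          (1 / 2) * Real.sqrt ((A t) ^ 2 + (B t) ^ 2) * Real.sinh (x + w t)
            - κ + (1 / 2) * (A t * Real.sin x + B t * Real.cos x)) x t := by
  have hC : ContDiff ℝ 2 (fun s => (A s) ^ 2 + (B s) ^ 2) := (hA.pow 2).add (hB.pow 2)
  have hR : ContDiff ℝ 2 (fun s => Real.sqrt ((A s) ^ 2 + (B s) ^ 2)) :=
    contDiff_iff_contDiffAt.mpr fun s => (hC.contDiffAt).sqrt (ne_of_gt (hpos s))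
  have hRsq : ∀ s : ℝ, (Real.sqrt ((A s) ^ 2 + (B s) ^ 2)) ^ 2 = (A s) ^ 2 + (B s) ^ 2 :=
    fun s => Real.sq_sqrt (le_of_lt (hpos s))
  exact key_solves κ A B w _ hA hB hw hR hAeq hBeq hRsq
end

section
/- Let α, β, c₂ be real constants, set γ = −1/2, κ = 0 and μ = 1, and let w : ℝ → ℝ be four times continuously differentiable and satisfy w·w⁗ + α·w′·w‴ + β·(w″)² − 4c₂·w‴ − w·w″ − (w′)² + 4c₂·w′ + 12c₂² = 0 on ℝ. Then the function u(x,t) = w(x − ⅓c₂·t³)·t − c₂²·t⁴ solves equation (1) at every point (x,t) ∈ ℝ². -/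
theorem cubic_accelerating_reduction_solves_eq1 (α β c₂ : ℝ) (w : ℝ → ℝ)
    (hw : ContDiff ℝ 4 w)
    (hODE : ∀ z : ℝ,
      w z * iteratedDeriv 4 w z
        + α * deriv w z * iteratedDeriv 3 w z
        + β * (iteratedDeriv 2 w z) ^ 2
        - 4 * c₂ * iteratedDeriv 3 w z
        - w z * iteratedDeriv 2 w z
        - (deriv w z) ^ 2
        + 4 * c₂ * deriv w z
        + 12 * c₂ ^ 2 = 0) :
    ∀ x t : ℝ,
      SolvesEq1 α β (-1 / 2) 0 1
        (fun x t => w (x - (1 / 3) * c₂ * t ^ 3) * t - c₂ ^ 2 * t ^ 4) x t := by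
  intro x t
  have ID2 : ∀ f : ℝ → ℝ, iteratedDeriv 2 f = deriv (deriv f) := by
    intro f; rw [show (2:ℕ) = 1+1 from rfl, iteratedDeriv_succ, iteratedDeriv_one]
  have ID3 : ∀ f : ℝ → ℝ, iteratedDeriv 3 f = deriv (deriv (deriv f)) := by
    intro f; rw [show (3:ℕ) = 2+1 from rfl, iteratedDeriv_succ, ID2]
  have ID4 : ∀ f : ℝ → ℝ, iteratedDeriv 4 f = deriv (deriv (deriv (deriv f))) := by
    intro f; rw [show (4:ℕ) = 3+1 from rfl, iteratedDeriv_succ, ID3]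
  -- differentiability of the iterated derivatives of w
  have dw : Differentiable ℝ w := hw.differentiable (by norm_num)
  have dw1 : Differentiable ℝ (deriv w) := by
    have h := hw.differentiable_iteratedDeriv 1 (by norm_num)
    simpa [iteratedDeriv_one] using h
  have dw2 : Differentiable ℝ (iteratedDeriv 2 w) :=
    hw.differentiable_iteratedDeriv 2 (by norm_num)
  have dw3 : Differentiable ℝ (iteratedDeriv 3 w) :=
    hw.differentiable_iteratedDeriv 3 (by norm_num)
  have Hd : ∀ y, HasDerivAt w (deriv w y) y := fun y => (dw y).hasDerivAt
  have Hd1 : ∀ y, HasDerivAt (deriv w) (iteratedDeriv 2 w y) y := by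
    intro y
    have h := (dw1 y).hasDerivAt
    rwa [show deriv (deriv w) y = iteratedDeriv 2 w y from by rw [ID2]] at h
  have Hd2 : ∀ y, HasDerivAt (iteratedDeriv 2 w) (iteratedDeriv 3 w y) y := by
    intro y
    have h := (dw2 y).hasDerivAt
    rwa [show deriv (iteratedDeriv 2 w) y = iteratedDeriv 3 w y from by
      rw [← iteratedDeriv_succ]] at h
  have Hd3 : ∀ y, HasDerivAt (iteratedDeriv 3 w) (iteratedDeriv 4 w y) y := by
    intro y
    have h := (dw3 y).hasDerivAt
    rwa [show deriv (iteratedDeriv 3 w) y = iteratedDeriv 4 w y from by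
      rw [← iteratedDeriv_succ]] at h
  -- composition with translations and with the cubic inner function
  have Hshift : ∀ (g g' : ℝ → ℝ), (∀ z, HasDerivAt g (g' z) z) → ∀ (A y : ℝ),
      HasDerivAt (fun y => g (y - A)) (g' (y - A)) y := by
    intro g g' hg A y
    simpa [Function.comp_def] using (hg (y - A)).comp y ((hasDerivAt_id y).sub_const A)
  have Hcub : ∀ (g g' : ℝ → ℝ), (∀ z, HasDerivAt g (g' z) z) → ∀ (b s : ℝ),
      HasDerivAt (fun s => g (b - 1/3*c₂*s^3)) (g' (b - 1/3*c₂*s^3) * -(c₂*s^2)) s := by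
    intro g g' hg b s
    have hin : HasDerivAt (fun s : ℝ => b - 1/3*c₂*s^3) (-(c₂*s^2)) s := by
      have h := ((hasDerivAt_pow 3 s).const_mul (1/3*c₂)).const_sub b
      exact h.congr_deriv (by push_cast; ring)
    simpa [Function.comp_def] using (hg _).comp s hin
  -- spatial derivatives
  have hU : ∀ y, HasDerivAt (fun y => w (y - 1/3*c₂*t^3) * t - c₂^2*t^4)
      (deriv w (y - 1/3*c₂*t^3) * t) y :=
    fun y => ((Hshift w (deriv w) Hd _ y).mul_const t).sub_const _
  have hV : ∀ y, HasDerivAt (fun y => deriv w (y - 1/3*c₂*t^3) * t)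
      (iteratedDeriv 2 w (y - 1/3*c₂*t^3) * t) y :=
    fun y => (Hshift _ _ Hd1 _ y).mul_const t
  have ex1 : deriv (fun y => w (y - 1/3*c₂*t^3) * t - c₂^2*t^4)
      = fun y => deriv w (y - 1/3*c₂*t^3) * t :=
    funext fun y => (hU y).deriv
  have ex2 : deriv (fun y => deriv w (y - 1/3*c₂*t^3) * t)
      = fun y => iteratedDeriv 2 w (y - 1/3*c₂*t^3) * t :=
    funext fun y => (hV y).deriv
  have ex3 : deriv (fun y => iteratedDeriv 2 w (y - 1/3*c₂*t^3) * t)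
      = fun y => iteratedDeriv 3 w (y - 1/3*c₂*t^3) * t :=
    funext fun y => ((Hshift _ _ Hd2 _ y).mul_const t).deriv
  have ex4 : deriv (fun y => iteratedDeriv 3 w (y - 1/3*c₂*t^3) * t)
      = fun y => iteratedDeriv 4 w (y - 1/3*c₂*t^3) * t :=
    funext fun y => ((Hshift _ _ Hd3 _ y).mul_const t).deriv
  -- the nonlinear term
  have en1 : deriv (fun y => 0 * (w (y - 1/3*c₂*t^3) * t - c₂^2*t^4)
        + -1/2 * (w (y - 1/3*c₂*t^3) * t - c₂^2*t^4)^2)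
      = fun y => -((w (y - 1/3*c₂*t^3) * t - c₂^2*t^4) * (deriv w (y - 1/3*c₂*t^3) * t)) := by
    funext y
    have h := ((hU y).const_mul (0:ℝ)).add (((hU y).pow 2).const_mul (-1/2))
    exact h.deriv.trans (by push_cast; ring)
  have en2 : deriv (fun y => -((w (y - 1/3*c₂*t^3) * t - c₂^2*t^4)
        * (deriv w (y - 1/3*c₂*t^3) * t))) x
      = -((deriv w (x - 1/3*c₂*t^3) * t) * (deriv w (x - 1/3*c₂*t^3) * t)
        + (w (x - 1/3*c₂*t^3) * t - c₂^2*t^4) * (iteratedDeriv 2 w (x - 1/3*c₂*t^3) * t)) := by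
    have h := ((hU x).mul (hV x)).neg
    exact h.deriv.trans (by ring)
  -- time derivatives (for an arbitrary base point b)
  have t1 : ∀ b : ℝ, deriv (fun s => w (b - 1/3*c₂*s^3) * s - c₂^2*s^4)
      = fun s => deriv w (b - 1/3*c₂*s^3) * -(c₂*s^2) * s + w (b - 1/3*c₂*s^3)
        - c₂^2 * (4*s^3) := by
    intro b; funext s
    have h := ((Hcub w (deriv w) Hd b s).mul (hasDerivAt_id s)).sub
      ((hasDerivAt_pow 4 s).const_mul (c₂^2))
    exact h.deriv.trans (by simp only [id_eq]; push_cast; ring)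
  have TT : ∀ b : ℝ, deriv (deriv fun s => w (b - 1/3*c₂*s^3) * s - c₂^2*s^4) t
      = c₂^2*t^5 * iteratedDeriv 2 w (b - 1/3*c₂*t^3)
        - 4*c₂*t^2 * deriv w (b - 1/3*c₂*t^3) - 12*c₂^2*t^2 := by
    intro b
    rw [t1 b]
    have hq : HasDerivAt (fun s : ℝ => -(c₂*s^2)) (-(c₂*(2*t))) t := by
      have h := ((hasDerivAt_pow 2 t).const_mul c₂).neg
      exact h.congr_deriv (by push_cast; ring)
    have h := ((((Hcub (deriv w) (iteratedDeriv 2 w) Hd1 b t).mul hq).mul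
        (hasDerivAt_id t)).add (Hcub w (deriv w) Hd b t)).sub
      (((hasDerivAt_pow 3 t).const_mul 4).const_mul (c₂^2))
    exact h.deriv.trans (by simp only [id_eq, Pi.mul_apply]; push_cast; ring)
  -- the mixed term
  have mu1 : deriv (fun y => c₂^2*t^5 * iteratedDeriv 2 w (y - 1/3*c₂*t^3)
        - 4*c₂*t^2 * deriv w (y - 1/3*c₂*t^3) - 12*c₂^2*t^2)
      = fun y => c₂^2*t^5 * iteratedDeriv 3 w (y - 1/3*c₂*t^3)
        - 4*c₂*t^2 * iteratedDeriv 2 w (y - 1/3*c₂*t^3) := by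
    funext y
    have h := (((Hshift _ _ Hd2 (1/3*c₂*t^3) y).const_mul (c₂^2*t^5)).sub
      ((Hshift _ _ Hd1 (1/3*c₂*t^3) y).const_mul (4*c₂*t^2))).sub_const (12*c₂^2*t^2)
    exact h.deriv.trans (by ring)
  have mu2 : deriv (fun y => c₂^2*t^5 * iteratedDeriv 3 w (y - 1/3*c₂*t^3)
        - 4*c₂*t^2 * iteratedDeriv 2 w (y - 1/3*c₂*t^3)) x
      = c₂^2*t^5 * iteratedDeriv 4 w (x - 1/3*c₂*t^3)
        - 4*c₂*t^2 * iteratedDeriv 3 w (x - 1/3*c₂*t^3) := by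
    have h := ((Hshift _ _ Hd3 (1/3*c₂*t^3) x).const_mul (c₂^2*t^5)).sub
      ((Hshift _ _ Hd2 (1/3*c₂*t^3) x).const_mul (4*c₂*t^2))
    exact h.deriv.trans (by ring)
  simp only [SolvesEq1, ID2, ID3, ID4]
  simp only [TT, ex1, ex2, ex3, ex4, en1, mu1]
  rw [en2, mu2]
  linear_combination (-(t^2)) * hODE (x - 1/3*c₂*t^3)
end

section
/- Let α, γ, κ be real constants with γ ≠ −1/2, and set β = −1 − α − 4γ and μ = 1. Then for an arbitrary twice continuously differentiable function w : ℝ → ℝ, the function u(x,t) = w(t)·exp(x) − κ/(1 + 2γ) solves equation (1) at every point (x,t) ∈ ℝ². -/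
lemma canonDeriv (A B C : ℝ) :
    deriv (fun y => A * (Real.exp y)^2 + B * Real.exp y + C)
      = fun x => (2*A) * (Real.exp x)^2 + B * Real.exp x + 0 := by
  funext x
  have h1 : HasDerivAt (fun y => (Real.exp y)^2) (2*(Real.exp x)^2) x := by
    have := (Real.hasDerivAt_exp x).pow 2
    exact this.congr_deriv (by push_cast; ring)
  have : HasDerivAt (fun y => A * (Real.exp y)^2 + B * Real.exp y + C)
      ((2*A) * (Real.exp x)^2 + B * Real.exp x + 0) x := by
    have := ((h1.const_mul A).add ((Real.hasDerivAt_exp x).const_mul B)).add_const C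
    exact this.congr_deriv (by ring)
  exact this.deriv

lemma canonId (A B C x : ℝ) :
    (fun y => A * (Real.exp y)^2 + B * Real.exp y + C) x
      = A * (Real.exp x)^2 + B * Real.exp x + C := rfl

lemma canon1 (A B C x : ℝ) :
    deriv (fun y => A * (Real.exp y)^2 + B * Real.exp y + C) x
      = (2*A) * (Real.exp x)^2 + B * Real.exp x := by
  rw [canonDeriv]; ring

lemma canon2 (A B C x : ℝ) :
    iteratedDeriv 2 (fun y => A * (Real.exp y)^2 + B * Real.exp y + C) x
      = (4*A) * (Real.exp x)^2 + B * Real.exp x := by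
  show iteratedDeriv (0+1+1) _ x = _
  rw [iteratedDeriv_succ', canonDeriv, iteratedDeriv_succ', canonDeriv, iteratedDeriv_zero]
  ring

lemma canon3 (A B C x : ℝ) :
    iteratedDeriv 3 (fun y => A * (Real.exp y)^2 + B * Real.exp y + C) x
      = (8*A) * (Real.exp x)^2 + B * Real.exp x := by
  show iteratedDeriv (0+1+1+1) _ x = _
  rw [iteratedDeriv_succ', canonDeriv,
    iteratedDeriv_succ', canonDeriv, iteratedDeriv_succ', canonDeriv, iteratedDeriv_zero]
  ring

lemma canon4 (A B C x : ℝ) :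
    iteratedDeriv 4 (fun y => A * (Real.exp y)^2 + B * Real.exp y + C) x
      = (16*A) * (Real.exp x)^2 + B * Real.exp x := by
  show iteratedDeriv (0+1+1+1+1) _ x = _
  rw [iteratedDeriv_succ', canonDeriv,
    iteratedDeriv_succ', canonDeriv, iteratedDeriv_succ', canonDeriv,
    iteratedDeriv_succ', canonDeriv, iteratedDeriv_zero]
  ring

lemma tDeriv2 (w : ℝ → ℝ) (hw : ContDiff ℝ 2 w) (a c t : ℝ) :
    iteratedDeriv 2 (fun s => w s * a - c) t = iteratedDeriv 2 w t * a := by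
  have hw1 : Differentiable ℝ w := hw.differentiable (by norm_num)
  have hw2 : Differentiable ℝ (deriv w) := by
    have h := (contDiff_succ_iff_deriv.mp (show ContDiff ℝ (1+1) w by norm_num; exact hw)).2
    exact h.2.differentiable (by norm_num)
  have hd : deriv (fun s => w s * a - c) = fun s => deriv w s * a := by
    funext s
    rw [deriv_sub_const]
    exact ((hw1 s).hasDerivAt.mul_const a).deriv
  show iteratedDeriv (0+1+1) _ t = _
  rw [iteratedDeriv_succ', hd, iteratedDeriv_succ']
  have hd2 : deriv (fun s => deriv w s * a) = fun s => deriv (deriv w) s * a := by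
    funext s
    exact ((hw2 s).hasDerivAt.mul_const a).deriv
  rw [hd2, iteratedDeriv_zero]
  simp [iteratedDeriv_succ, iteratedDeriv_zero]

theorem singular_nonclassical_case_e_solves_eq1 (α γ κ : ℝ) (hγ : γ ≠ -1 / 2)
    (w : ℝ → ℝ) (hw : ContDiff ℝ 2 w) :
    ∀ x t : ℝ,
      SolvesEq1 α (-1 - α - 4 * γ) γ κ 1
        (fun x t => w t * Real.exp x - κ / (1 + 2 * γ)) x t := by
  intro x t
  set c : ℝ := κ / (1 + 2 * γ) with hc
  have hne : (1 + 2 * γ) ≠ 0 := by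
    intro h; apply hγ; linarith
  unfold SolvesEq1
  simp only []
  have hu : (fun y => w t * Real.exp y - c)
      = fun y => (0:ℝ) * (Real.exp y)^2 + (w t) * Real.exp y + (-c) := by
    funext y; ring
  have hq : (fun y => κ * (w t * Real.exp y - c) + γ * (w t * Real.exp y - c)^2)
      = fun y => (γ * (w t)^2) * (Real.exp y)^2 + ((κ - 2*γ*c) * w t) * Real.exp y
          + (γ * c^2 - κ * c) := by
    funext y; ring
  have hmu : (fun y => iteratedDeriv 2 (fun s => w s * Real.exp y - c) t)
      = fun y => (0:ℝ) * (Real.exp y)^2 + (iteratedDeriv 2 w t) * Real.exp y + 0 := by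
    funext y
    rw [tDeriv2 w hw (Real.exp y) c t]; ring
  rw [tDeriv2 w hw (Real.exp x) c t, hq, hmu, hu, canon2, canon2, canon4, canon1, canon3,
    canon2]
  have hcc : c * (1 + 2*γ) = κ := by
    rw [hc]; field_simp
  linear_combination (w t * Real.exp x) * hcc
end

section
/- Let α, β, γ, κ, μ be real constants and let H₁, H₂, w : ℝ → ℝ be twice continuously differentiable functions satisfying, for all t: H₂″ = 12γ·H₂², H₁″ = 12γ·H₂·H₁, and w″ − 4γ·H₂·w = 2κ·H₂ + 4·(6γμ + β)·H₂² + 2γ·H₁². Then the function u(x,t) = w(t) + H₁(t)·x + H₂(t)·x² solves equation (1) at every point (x,t) ∈ ℝ². -/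
/-- Derivative of a quartic polynomial. -/
lemma quarticHasDerivAt (a b c d e y : ℝ) :
    HasDerivAt (fun y : ℝ => a + b * y + c * y ^ 2 + d * y ^ 3 + e * y ^ 4)
      (b + 2 * c * y + 3 * d * y ^ 2 + 4 * e * y ^ 3) y := by
  have h := ((((hasDerivAt_const y a).add ((hasDerivAt_id y).const_mul b)).add
    ((hasDerivAt_pow 2 y).const_mul c)).add ((hasDerivAt_pow 3 y).const_mul d)).add
    ((hasDerivAt_pow 4 y).const_mul e)
  convert h using 1
  · rfl
  · rfl
  · rfl
  · norm_num
    ring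

lemma quarticDeriv (a b c d e : ℝ) :
    deriv (fun y : ℝ => a + b * y + c * y ^ 2 + d * y ^ 3 + e * y ^ 4)
      = fun y => b + 2 * c * y + 3 * d * y ^ 2 + 4 * e * y ^ 3 := by
  funext y; exact (quarticHasDerivAt a b c d e y).deriv

lemma cubicDeriv (b c d e : ℝ) :
    deriv (fun y : ℝ => b + 2 * c * y + 3 * d * y ^ 2 + 4 * e * y ^ 3)
      = fun y => 2 * c + 6 * d * y + 12 * e * y ^ 2 := by
  have h1 : (fun y : ℝ => b + 2 * c * y + 3 * d * y ^ 2 + 4 * e * y ^ 3)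
      = fun y : ℝ => b + (2 * c) * y + (3 * d) * y ^ 2 + (4 * e) * y ^ 3 + 0 * y ^ 4 := by
    funext y; ring
  rw [h1, quarticDeriv]
  funext y; ring

lemma quadDeriv2 (c d e : ℝ) :
    deriv (fun y : ℝ => 2 * c + 6 * d * y + 12 * e * y ^ 2)
      = fun y => 6 * d + 24 * e * y := by
  have h1 : (fun y : ℝ => 2 * c + 6 * d * y + 12 * e * y ^ 2)
      = fun y : ℝ => 2 * c + (6 * d) * y + (12 * e) * y ^ 2 + 0 * y ^ 3 + 0 * y ^ 4 := by
    funext y; ring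
  rw [h1, quarticDeriv]
  funext y; ring

lemma linDeriv2 (d e : ℝ) :
    deriv (fun y : ℝ => 6 * d + 24 * e * y) = fun _ => 24 * e := by
  have h1 : (fun y : ℝ => 6 * d + 24 * e * y)
      = fun y : ℝ => 6 * d + (24 * e) * y + 0 * y ^ 2 + 0 * y ^ 3 + 0 * y ^ 4 := by
    funext y; ring
  rw [h1, quarticDeriv]
  funext y; ring

lemma quarticIter2 (a b c d e : ℝ) :
    iteratedDeriv 2 (fun y : ℝ => a + b * y + c * y ^ 2 + d * y ^ 3 + e * y ^ 4)
      = fun y => 2 * c + 6 * d * y + 12 * e * y ^ 2 := by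
  rw [iteratedDeriv_succ, iteratedDeriv_one, quarticDeriv, cubicDeriv]

lemma quarticIter3 (a b c d e : ℝ) :
    iteratedDeriv 3 (fun y : ℝ => a + b * y + c * y ^ 2 + d * y ^ 3 + e * y ^ 4)
      = fun y => 6 * d + 24 * e * y := by
  rw [iteratedDeriv_succ, quarticIter2, quadDeriv2]

lemma quarticIter4 (a b c d e : ℝ) :
    iteratedDeriv 4 (fun y : ℝ => a + b * y + c * y ^ 2 + d * y ^ 3 + e * y ^ 4)
      = fun _ => 24 * e := by
  rw [iteratedDeriv_succ, quarticIter3, linDeriv2]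

/-- Second derivative of a combination `s ↦ w s + H₁ s * x + H₂ s * x²`. -/
lemma iter2_comb (w H₁ H₂ : ℝ → ℝ) (hw : ContDiff ℝ 2 w) (hH₁ : ContDiff ℝ 2 H₁)
    (hH₂ : ContDiff ℝ 2 H₂) (x t : ℝ) :
    iteratedDeriv 2 (fun s => w s + H₁ s * x + H₂ s * x ^ 2) t
      = iteratedDeriv 2 w t + iteratedDeriv 2 H₁ t * x + iteratedDeriv 2 H₂ t * x ^ 2 := by
  have h2 : (2 : WithTop ℕ∞) = 1 + 1 := by norm_num
  rw [h2] at hw hH₁ hH₂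
  have hw1 : Differentiable ℝ w := hw.differentiable (by norm_num)
  have hH₁1 : Differentiable ℝ H₁ := hH₁.differentiable (by norm_num)
  have hH₂1 : Differentiable ℝ H₂ := hH₂.differentiable (by norm_num)
  have hw2 : Differentiable ℝ (deriv w) :=
    (contDiff_succ_iff_deriv.mp hw).2.2.differentiable one_ne_zero
  have hH₁2 : Differentiable ℝ (deriv H₁) :=
    (contDiff_succ_iff_deriv.mp hH₁).2.2.differentiable one_ne_zero
  have hH₂2 : Differentiable ℝ (deriv H₂) :=
    (contDiff_succ_iff_deriv.mp hH₂).2.2.differentiable one_ne_zero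
  have hd1 : deriv (fun s => w s + H₁ s * x + H₂ s * x ^ 2)
      = fun s => deriv w s + deriv H₁ s * x + deriv H₂ s * x ^ 2 := by
    funext s
    exact ((((hw1 s).hasDerivAt.add ((hH₁1 s).hasDerivAt.mul_const x)).add
      ((hH₂1 s).hasDerivAt.mul_const (x ^ 2)))).deriv
  have hd2 : deriv (fun s => deriv w s + deriv H₁ s * x + deriv H₂ s * x ^ 2) t
      = deriv (deriv w) t + deriv (deriv H₁) t * x + deriv (deriv H₂) t * x ^ 2 :=
    ((((hw2 t).hasDerivAt.add ((hH₁2 t).hasDerivAt.mul_const x)).add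
      ((hH₂2 t).hasDerivAt.mul_const (x ^ 2)))).deriv
  rw [iteratedDeriv_succ, iteratedDeriv_one, hd1, hd2,
    iteratedDeriv_succ, iteratedDeriv_one, iteratedDeriv_succ, iteratedDeriv_one,
    iteratedDeriv_succ, iteratedDeriv_one]

theorem quadratic_profile_reduction_solves_eq1 (α β γ κ μ : ℝ)
    (H₁ H₂ w : ℝ → ℝ)
    (hH₁ : ContDiff ℝ 2 H₁) (hH₂ : ContDiff ℝ 2 H₂) (hw : ContDiff ℝ 2 w)
    (hH₂eq : ∀ t : ℝ, iteratedDeriv 2 H₂ t = 12 * γ * (H₂ t) ^ 2)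
    (hH₁eq : ∀ t : ℝ, iteratedDeriv 2 H₁ t = 12 * γ * H₂ t * H₁ t)
    (hweq : ∀ t : ℝ,
      iteratedDeriv 2 w t - 4 * γ * H₂ t * w t =
        2 * κ * H₂ t + 4 * (6 * γ * μ + β) * (H₂ t) ^ 2 + 2 * γ * (H₁ t) ^ 2) :
    ∀ x t : ℝ,
      SolvesEq1 α β γ κ μ
        (fun x t => w t + H₁ t * x + H₂ t * x ^ 2) x t := by
  intro x t
  unfold SolvesEq1
  simp only []
  set W := w t with hW
  set A := H₁ t with hA
  set B := H₂ t with hB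
  -- the quartic form of κ u + γ u²
  have hq : (fun y => κ * (W + A * y + B * y ^ 2) + γ * (W + A * y + B * y ^ 2) ^ 2)
      = fun y : ℝ => (κ * W + γ * W ^ 2) + (κ * A + 2 * γ * W * A) * y
        + (κ * B + γ * (A ^ 2 + 2 * W * B)) * y ^ 2 + (2 * γ * A * B) * y ^ 3
        + (γ * B ^ 2) * y ^ 4 := by
    funext y; ring
  -- the quadratic form of u(·, t)
  have hu : (fun y : ℝ => W + A * y + B * y ^ 2)
      = fun y : ℝ => W + A * y + B * y ^ 2 + 0 * y ^ 3 + 0 * y ^ 4 := by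
    funext y; ring
  -- the inner t-second-derivative as a function of y
  have hin : (fun y => iteratedDeriv 2 (fun s => w s + H₁ s * y + H₂ s * y ^ 2) t)
      = fun y : ℝ => iteratedDeriv 2 w t + iteratedDeriv 2 H₁ t * y
          + iteratedDeriv 2 H₂ t * y ^ 2 + 0 * y ^ 3 + 0 * y ^ 4 := by
    funext y
    rw [iter2_comb w H₁ H₂ hw hH₁ hH₂ y t]
    ring
  rw [iter2_comb w H₁ H₂ hw hH₁ hH₂ x t, hq, hu, hin, quarticIter2, quarticIter2,
    quarticIter3, quarticIter4, quarticDeriv, quarticIter2]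
  have hw2 : iteratedDeriv 2 w t
      = 4 * γ * B * W + 2 * κ * B + 4 * (6 * γ * μ + β) * B ^ 2 + 2 * γ * A ^ 2 := by
    have := hweq t; rw [← hW, ← hA, ← hB] at this; linarith
  rw [hH₂eq t, hH₁eq t, hw2, ← hA, ← hB]
  ring
end
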